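/- arXiv:1810.10846 — 6 statements merged into one kernel-verified Lean document; each statement's English description precedes it below -/
import Mathlib

section
/- For any finite nonempty set A of positive real numbers, |A/A + A| ≫ |A|^{3/2}. -/
open Finset

private lemma master_bound (A : Finset ℝ) (hpos : ∀ a ∈ A, 0 < a) (m : ℕ) (hm : 1 ≤ m)
    (hcard : A.card = m + 1) :
    (m + 1) * (m + 1) * m ≤
      4 * (Finset.image₂ (· + ·) (Finset.image₂ (· / ·) A A) A).card *
          (Finset.image₂ (· + ·) (Finset.image₂ (· / ·) A A) A).card +
        2 * (Finset.image₂ (· + ·) (Finset.image₂ (· / ·) A A) A).card * m := by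
  classical
  set S : Finset ℝ := Finset.image₂ (· + ·) (Finset.image₂ (· / ·) A A) A with hSdef
  set s : ℕ := S.card with hsdef
  have hAne : A.Nonempty := card_pos.1 (by omega)
  have hSne : S.Nonempty := Finset.Nonempty.image₂ (Finset.Nonempty.image₂ hAne hAne) hAne
  have hs1 : 1 ≤ s := hSne.card_pos
  set f := A.orderEmbOfFin hcard with hfdef
  have hfmem : ∀ i, f i ∈ A := fun i => Finset.orderEmbOfFin_mem A hcard i
  have hfpos : ∀ i, (0:ℝ) < f i := fun i => hpos _ (hfmem i)
  have hfmono : StrictMono f := f.strictMono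
  have hlohi : ∀ i : Fin m, f (Fin.castSucc i) < f (Fin.succ i) :=
    fun i => hfmono Fin.castSucc_lt_succ
  set X : ℝ × ℝ × Fin m → ℝ := fun z => z.1 / f (Fin.succ z.2.2) + z.2.1 with hXdef
  set Y : ℝ × ℝ × Fin m → ℝ := fun z => z.1 / f (Fin.castSucc z.2.2) + z.2.1 with hYdef
  set T : ℝ × ℝ × Fin m → Finset ℝ := fun z => S.filter (fun u => X z < u ∧ u ≤ Y z) with hTdef
  set jmp : ℝ × ℝ × Fin m → ℕ := fun z => (T z).card with hjdef
  have hmemS : ∀ t ∈ A, ∀ b ∈ A, ∀ a ∈ A, t / a + b ∈ S := by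
    intro t ht b hb a ha
    rw [hSdef]
    exact mem_image₂_of_mem (mem_image₂_of_mem ht ha) hb
  have hXS : ∀ z : ℝ × ℝ × Fin m, z.1 ∈ A → z.2.1 ∈ A → X z ∈ S := by
    intro z h1 h2
    simp only [hXdef]
    exact hmemS _ h1 _ h2 _ (hfmem _)
  have hYS : ∀ z : ℝ × ℝ × Fin m, z.1 ∈ A → z.2.1 ∈ A → Y z ∈ S := by
    intro z h1 h2
    simp only [hYdef]
    exact hmemS _ h1 _ h2 _ (hfmem _)
  have hXY : ∀ z : ℝ × ℝ × Fin m, z.1 ∈ A → X z < Y z := by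
    intro z h1
    have hp : (0:ℝ) < z.1 := hpos _ h1
    have h2 : 1 / f (Fin.succ z.2.2) < 1 / f (Fin.castSucc z.2.2) :=
      one_div_lt_one_div_of_lt (hfpos _) (hlohi _)
    have h3 := mul_lt_mul_of_pos_left h2 hp
    simp only [hXdef, hYdef]
    rw [div_eq_mul_one_div z.1 (f (Fin.succ z.2.2)),
      div_eq_mul_one_div z.1 (f (Fin.castSucc z.2.2))]
    linarith
  -- row telescoping bound
  have hrow : ∀ t ∈ A, ∀ b ∈ A, ∑ i : Fin m, jmp (t, b, i) ≤ s := by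
    intro t ht b hb
    have hpt : (0:ℝ) < t := hpos _ ht
    have key : ∀ i j : Fin m, (i:ℕ) < (j:ℕ) → Disjoint (T (t,b,i)) (T (t,b,j)) := by
      intro i j hlt
      rw [Finset.disjoint_left]
      intro u hui huj
      simp only [hTdef, mem_filter, hXdef, hYdef] at hui huj
      have hfle : f (Fin.succ i) ≤ f (Fin.castSucc j) := by
        apply hfmono.monotone
        rw [Fin.le_def]
        simp only [Fin.val_succ, Fin.coe_castSucc]
        omega
      have hdiv : t / f (Fin.castSucc j) ≤ t / f (Fin.succ i) := by
        apply div_le_div_of_nonneg_left hpt.le (hfpos _) hfle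
      have h1 := hui.2.1
      have h2 := huj.2.2
      linarith
    have hdisj : ∀ i ∈ (univ : Finset (Fin m)), ∀ j ∈ (univ : Finset (Fin m)), i ≠ j →
        Disjoint (T (t,b,i)) (T (t,b,j)) := by
      intro i _ j _ hij
      rcases Nat.lt_or_ge (i:ℕ) (j:ℕ) with h | h
      · exact key i j h
      · have : (j:ℕ) < (i:ℕ) := by
          rcases Nat.lt_or_ge (j:ℕ) (i:ℕ) with h' | h'
          · exact h'
          · exact absurd (Fin.ext (le_antisymm h' h)) hij
        exact (key j i this).symm
    calc ∑ i : Fin m, jmp (t,b,i)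
        = ((univ : Finset (Fin m)).biUnion fun i => T (t,b,i)).card := by
          rw [Finset.card_biUnion hdisj]
      _ ≤ s := by
          apply Finset.card_le_card
          intro u hu
          rw [mem_biUnion] at hu
          obtain ⟨i, _, hu⟩ := hu
          simp only [hTdef, mem_filter] at hu
          exact hu.1
  set D : Finset (ℝ × ℝ × Fin m) := A ×ˢ (A ×ˢ (univ : Finset (Fin m))) with hDdef
  have hDcard : D.card = (m+1) * ((m+1) * m) := by
    simp [hDdef, Finset.card_product, hcard, Fintype.card_fin]
  have htot : ∑ z ∈ D, jmp z ≤ (m+1) * ((m+1) * s) := by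
    rw [hDdef, Finset.sum_product]
    have hinner : ∀ t ∈ A, ∑ y ∈ A ×ˢ (univ : Finset (Fin m)), jmp (t, y) ≤ (m+1) * s := by
      intro t ht
      rw [Finset.sum_product]
      calc ∑ b ∈ A, ∑ i : Fin m, jmp (t, b, i) ≤ ∑ _b ∈ A, s :=
            Finset.sum_le_sum (fun b hb => hrow t ht b hb)
        _ = (m+1) * s := by rw [Finset.sum_const, hcard, smul_eq_mul]
    calc ∑ t ∈ A, ∑ y ∈ A ×ˢ (univ : Finset (Fin m)), jmp (t, y)
        ≤ ∑ _t ∈ A, (m+1) * s := Finset.sum_le_sum hinner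
      _ = (m+1) * ((m+1) * s) := by rw [Finset.sum_const, hcard, smul_eq_mul]
  set J : ℕ := 2 * s / m + 1 with hJdef
  set Good := D.filter (fun z => jmp z ≤ J) with hGdef
  set Bad := D.filter (fun z => ¬ (jmp z ≤ J)) with hBdef
  have hpart : Good.card + Bad.card = (m+1) * ((m+1) * m) := by
    rw [hGdef, hBdef, Finset.card_filter_add_card_filter_not, hDcard]
  have hBadB : (J + 1) * Bad.card ≤ (m+1) * ((m+1) * s) := by
    have h1 : Bad.card • (J+1) ≤ ∑ z ∈ Bad, jmp z := by
      apply Finset.card_nsmul_le_sum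
      intro z hz
      rw [hBdef, mem_filter] at hz
      omega
    have h2 : ∑ z ∈ Bad, jmp z ≤ ∑ z ∈ D, jmp z := by
      apply Finset.sum_le_sum_of_subset
      rw [hBdef]
      exact Finset.filter_subset _ _
    calc (J+1) * Bad.card = Bad.card • (J+1) := by rw [smul_eq_mul, mul_comm]
      _ ≤ ∑ z ∈ Bad, jmp z := h1
      _ ≤ ∑ z ∈ D, jmp z := h2
      _ ≤ (m+1) * ((m+1) * s) := htot
  have hGoodmem : ∀ z ∈ Good, z.1 ∈ A ∧ z.2.1 ∈ A ∧ jmp z ≤ J := by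
    intro z hz
    rw [hGdef, mem_filter] at hz
    obtain ⟨hD, hJz⟩ := hz
    rw [hDdef, Finset.mem_product] at hD
    obtain ⟨h1, h2⟩ := hD
    rw [Finset.mem_product] at h2
    exact ⟨h1, h2.1, hJz⟩
  -- key monotonicity: same X, smaller Y ⇒ smaller jump
  have hkey : ∀ p q : ℝ × ℝ × Fin m, p.1 ∈ A → q.1 ∈ A → q.2.1 ∈ A →
      X p = X q → Y p < Y q → jmp p < jmp q := by
    intro p q hp1 hq1 hq2 hXpq hYpq
    simp only [hjdef]
    apply Finset.card_lt_card
    rw [Finset.ssubset_iff_of_subset]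
    · refine ⟨Y q, ?_, ?_⟩
      · simp only [hTdef, mem_filter]
        exact ⟨hYS q hq1 hq2, hXY q hq1, le_rfl⟩
      · simp only [hTdef, mem_filter]
        push_neg
        intro _ _
        linarith
    · intro u hu
      simp only [hTdef, mem_filter] at hu ⊢
      exact ⟨hu.1, hXpq ▸ hu.2.1, hu.2.2.trans hYpq.le⟩
  have hGoodB : Good.card ≤ m * (s * J) := by
    have hmaps : ∀ z ∈ Good,
        (z.2.2, X z, jmp z) ∈ (univ : Finset (Fin m)) ×ˢ (S ×ˢ Finset.Icc 1 J) := by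
      intro z hz
      obtain ⟨h1, h2, h3⟩ := hGoodmem z hz
      rw [Finset.mem_product, Finset.mem_product, Finset.mem_Icc]
      refine ⟨mem_univ _, hXS z h1 h2, ?_, h3⟩
      have hY : Y z ∈ T z := by
        simp only [hTdef, mem_filter]
        exact ⟨hYS z h1 h2, hXY z h1, le_rfl⟩
      have : 0 < (T z).card := Finset.card_pos.2 ⟨_, hY⟩
      simp only [hjdef]
      omega
    have hinj : Set.InjOn (fun z : ℝ × ℝ × Fin m => (z.2.2, X z, jmp z)) Good := by
      rintro ⟨t, b, i⟩ hz ⟨t', b', i'⟩ hz' heq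
      simp only [Prod.mk.injEq] at heq
      obtain ⟨hieq, hXeq, hjeq⟩ := heq
      subst hieq
      obtain ⟨ht, hb, -⟩ := hGoodmem _ hz
      obtain ⟨ht', hb', -⟩ := hGoodmem _ hz'
      simp only at ht hb ht' hb'
      have hYeq : Y (t, b, i) = Y (t', b', i) := by
        rcases lt_trichotomy (Y (t, b, i)) (Y (t', b', i)) with h | h | h
        · exact absurd (hkey _ _ ht ht' hb' hXeq h) (by omega)
        · exact h
        · exact absurd (hkey _ _ ht' ht hb hXeq.symm h) (by omega)
      simp only [hXdef, hYdef] at hXeq hYeq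
      have hlopos := hfpos (Fin.castSucc i)
      have hhipos := hfpos (Fin.succ i)
      have hw : (0:ℝ) < 1 / f (Fin.castSucc i) - 1 / f (Fin.succ i) := by
        rw [sub_pos]
        exact one_div_lt_one_div_of_lt hlopos (hlohi i)
      have hsub : t * (1 / f (Fin.castSucc i) - 1 / f (Fin.succ i)) =
          t' * (1 / f (Fin.castSucc i) - 1 / f (Fin.succ i)) := by
        have e1 : t / f (Fin.castSucc i) - t / f (Fin.succ i) =
            t * (1 / f (Fin.castSucc i) - 1 / f (Fin.succ i)) := by ring
        have e2 : t' / f (Fin.castSucc i) - t' / f (Fin.succ i) =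
            t' * (1 / f (Fin.castSucc i) - 1 / f (Fin.succ i)) := by ring
        rw [← e1, ← e2]
        linarith
      have htt : t = t' := mul_right_cancel₀ (ne_of_gt hw) hsub
      have hbb : b = b' := by
        rw [htt] at hXeq
        linarith
      rw [htt, hbb]
    calc Good.card ≤ ((univ : Finset (Fin m)) ×ˢ (S ×ˢ Finset.Icc 1 J)).card :=
          Finset.card_le_card_of_injOn _ hmaps hinj
      _ = m * (s * J) := by
          simp [Finset.card_product, Fintype.card_fin, Nat.card_Icc, ← hsdef]
  -- Nat arithmetic
  have hq := Nat.div_add_mod (2*s) m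
  have hr : (2*s) % m < m := Nat.mod_lt _ (by omega)
  have hJm : m * J ≤ 2*s + m := by
    have e : m * J = m * (2*s/m) + m := by rw [hJdef]; ring
    have h2 : m * (2*s/m) ≤ 2*s := by omega
    omega
  have hJ2 : 2*s ≤ m * (J+1) := by
    have e : m * (J+1) = m * (2*s/m) + m + m := by rw [hJdef]; ring
    omega
  have hBad2 : 2 * Bad.card ≤ (m+1) * ((m+1) * m) := by
    have h1 : (2*s) * Bad.card ≤ (m*(J+1)) * Bad.card :=
      Nat.mul_le_mul_right _ hJ2
    have h3 : m * ((J+1) * Bad.card) ≤ m * ((m+1)*((m+1)*s)) :=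
      Nat.mul_le_mul_left _ hBadB
    have h4 : (2 * Bad.card) * s ≤ ((m+1)*((m+1)*m)) * s := by
      calc (2 * Bad.card) * s = (2*s) * Bad.card := by ring
        _ ≤ (m*(J+1)) * Bad.card := h1
        _ = m * ((J+1) * Bad.card) := by ring
        _ ≤ m * ((m+1)*((m+1)*s)) := h3
        _ = ((m+1)*((m+1)*m)) * s := by ring
    exact Nat.le_of_mul_le_mul_right h4 (by omega)
  have hGood2 : (m+1) * ((m+1) * m) ≤ 2 * Good.card := by omega
  have h5 : (m+1) * ((m+1) * m) ≤ 2 * (m * (s * J)) := by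
    calc (m+1) * ((m+1) * m) ≤ 2 * Good.card := hGood2
      _ ≤ 2 * (m * (s * J)) := by
          have := hGoodB
          omega
  have h6 : ((m+1)*(m+1)) * m ≤ (2*(s*J)) * m := by
    calc ((m+1)*(m+1)) * m = (m+1) * ((m+1) * m) := by ring
      _ ≤ 2 * (m * (s * J)) := h5
      _ = (2*(s*J)) * m := by ring
  have h7 : (m+1)*(m+1) ≤ 2*(s*J) := Nat.le_of_mul_le_mul_right h6 (by omega)
  have h8 : (m+1)*(m+1)*m ≤ 2*s*(2*s + m) := by
    calc (m+1)*(m+1)*m ≤ (2*(s*J))*m := Nat.mul_le_mul_right _ h7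
      _ = (2*s)*(m*J) := by ring
      _ ≤ (2*s)*(2*s+m) := Nat.mul_le_mul_left _ hJm
  calc (m+1)*(m+1)*m ≤ 2*s*(2*s+m) := h8
    _ = 4*s*s + 2*s*m := by ring

theorem ratio_plus_A_threshold :
    ∃ c : ℝ, 0 < c ∧ ∀ A : Finset ℝ, A.Nonempty → (∀ a ∈ A, 0 < a) →
      c * (A.card : ℝ) ^ ((3 : ℝ) / 2) ≤
        ((Finset.image₂ (· + ·) (Finset.image₂ (· / ·) A A) A).card : ℝ) := by
  classical
  refine ⟨1/4, by norm_num, ?_⟩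
  intro A hA hpos
  set S : Finset ℝ := Finset.image₂ (· + ·) (Finset.image₂ (· / ·) A A) A with hSdef
  have hSne : S.Nonempty := Finset.Nonempty.image₂ (Finset.Nonempty.image₂ hA hA) hA
  have hs1 : 1 ≤ S.card := hSne.card_pos
  have hsR : (1:ℝ) ≤ (S.card : ℝ) := by exact_mod_cast hs1
  rcases Nat.lt_or_ge A.card 2 with h2 | h2
  · have h1 : A.card = 1 := by
      have := hA.card_pos
      omega
    rw [h1]
    simp only [Nat.cast_one, Real.one_rpow]
    linarith
  · set m : ℕ := A.card - 1 with hm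
    have hm1 : 1 ≤ m := by omega
    have hcard : A.card = m + 1 := by omega
    have master := master_bound A hpos m hm1 hcard
    rw [← hSdef] at master
    set n : ℕ := A.card with hn
    have hcast : ((m:ℝ)+1) * ((m:ℝ)+1) * (m:ℝ) ≤
        4*(S.card:ℝ)*(S.card:ℝ) + 2*(S.card:ℝ)*(m:ℝ) := by
      exact_mod_cast master
    have hMR : (m:ℝ) = (n:ℝ) - 1 := by
      have h : ((m:ℝ)+1) = (n:ℝ) := by exact_mod_cast hcard.symm
      linarith only [h]
    rw [hMR] at hcast
    have hmaster : (n:ℝ) * (n:ℝ) * ((n:ℝ) - 1) ≤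
        4*(S.card:ℝ)*(S.card:ℝ) + 2*(S.card:ℝ)*((n:ℝ)-1) := by
      linarith only [hcast]
    have hN2 : (2:ℝ) ≤ (n:ℝ) := by exact_mod_cast h2
    have hN0 : (0:ℝ) ≤ (n:ℝ) := by linarith only [hN2]
    rcases le_or_gt ((n:ℝ)*(n:ℝ)) (4*(S.card:ℝ)) with hc | hc
    · -- n^{3/2} ≤ n² ≤ 4σ
      have h1 : (n:ℝ) ^ ((3:ℝ)/2) ≤ (n:ℝ) ^ (2:ℝ) :=
        Real.rpow_le_rpow_of_exponent_le (by linarith only [hN2]) (by norm_num)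
      have h2' : (n:ℝ) ^ (2:ℝ) = (n:ℝ) * (n:ℝ) := by
        rw [show (2:ℝ) = ((2:ℕ):ℝ) by norm_num, Real.rpow_natCast]
        ring
      rw [h2'] at h1
      have h3 : (n:ℝ) ^ ((3:ℝ)/2) ≤ 4*(S.card:ℝ) := by linarith only [h1, hc]
      linarith only [h3]
    · have hM : (n:ℝ) - 1 ≥ (n:ℝ)/2 := by linarith only [hN2]
      have e1 : 4*(S.card:ℝ)*((n:ℝ)-1) ≤ (n:ℝ)*(n:ℝ)*((n:ℝ)-1) :=
        mul_le_mul_of_nonneg_right hc.le (by linarith only [hN2])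
      have e2 : (n:ℝ)*(n:ℝ)*((n:ℝ)/2) ≤ (n:ℝ)*(n:ℝ)*((n:ℝ)-1) :=
        mul_le_mul_of_nonneg_left hM (mul_nonneg hN0 hN0)
      have hσ2 : (n:ℝ)*(n:ℝ)*(n:ℝ) ≤ 16 * ((S.card:ℝ)*(S.card:ℝ)) := by
        linarith only [hmaster, e1, e2]
      have hcube : ((n:ℝ) ^ ((3:ℝ)/2)) * ((n:ℝ) ^ ((3:ℝ)/2)) = (n:ℝ)*(n:ℝ)*(n:ℝ) := by
        rw [← Real.rpow_add' hN0 (by norm_num)]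
        rw [show (3:ℝ)/2 + 3/2 = ((3:ℕ):ℝ) by norm_num, Real.rpow_natCast]
        ring
      have hpow : (0:ℝ) ≤ (n:ℝ) ^ ((3:ℝ)/2) := Real.rpow_nonneg hN0 _
      have hP2 : ((n:ℝ) ^ ((3:ℝ)/2))^2 ≤ (4*(S.card:ℝ))^2 := by
        rw [sq, sq]
        linarith only [hσ2, hcube]
      have h4σ : (0:ℝ) ≤ 4*(S.card:ℝ) := by linarith only [hsR]
      have hfin : (n:ℝ) ^ ((3:ℝ)/2) ≤ 4*(S.card:ℝ) :=
        le_of_pow_le_pow_left₀ two_ne_zero h4σ hP2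
      linarith only [hfin]
end

section
/- For any finite nonempty set A of positive real numbers, |AA + A| ≫ |A|^{3/2}, where AA + A = {ab + c : a,b,c ∈ A}. -/
open Finset

open scoped Classical

noncomputable section AAAux

namespace AAAux

/-- number of elements of `A` below `a` -/
def idx (A : Finset ℝ) (a : ℝ) : ℕ := (A.filter (· < a)).card

/-- block index at scale `u` -/
def blk (A : Finset ℝ) (u : ℕ) (a : ℝ) : ℕ := idx A a / u

variable {A : Finset ℝ}

lemma idx_lt_card {a : ℝ} (ha : a ∈ A) : idx A a < A.card := by
  have hsub : A.filter (· < a) ⊆ A.erase a := by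
    intro b hb
    rw [mem_filter] at hb
    exact mem_erase.mpr ⟨ne_of_lt hb.2, hb.1⟩
  calc idx A a ≤ (A.erase a).card := card_le_card hsub
    _ < A.card := card_erase_lt_of_mem ha

lemma idx_lt_idx {a b : ℝ} (ha : a ∈ A) (hb : b ∈ A) (hab : a < b) :
    idx A a < idx A b := by
  apply card_lt_card
  have hsub : A.filter (· < a) ⊆ A.filter (· < b) := by
    intro x hx
    rw [mem_filter] at hx ⊢
    exact ⟨hx.1, lt_trans hx.2 hab⟩
  rw [Finset.ssubset_iff_of_subset hsub]
  refine ⟨a, mem_filter.mpr ⟨ha, hab⟩, ?_⟩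
  simp [mem_filter]

lemma idx_injOn : Set.InjOn (idx A) ↑A := by
  intro a ha b hb h
  by_contra hne
  rcases lt_or_gt_of_ne hne with h1 | h1
  · exact absurd h (ne_of_lt (idx_lt_idx ha hb h1))
  · exact absurd h.symm (ne_of_lt (idx_lt_idx hb ha h1))

lemma blk_mono {a b : ℝ} (ha : a ∈ A) (hb : b ∈ A) (hab : a ≤ b) (u : ℕ) :
    blk A u a ≤ blk A u b := by
  rcases eq_or_lt_of_le hab with rfl | h
  · exact le_refl _
  · exact Nat.div_le_div_right (le_of_lt (idx_lt_idx ha hb h))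

lemma blk_le {a : ℝ} (ha : a ∈ A) (u : ℕ) : blk A u a ≤ (A.card - 1) / u :=
  Nat.div_le_div_right (Nat.le_pred_of_lt (idx_lt_card ha))

lemma card_blk_fiber_le {u : ℕ} (hu : 0 < u) (I : ℕ) :
    (A.filter fun b => blk A u b = I).card ≤ u := by
  have hmap : ∀ b ∈ A.filter (fun b => blk A u b = I),
      idx A b ∈ Finset.Ico (I * u) (I * u + u) := by
    intro b hb
    rw [mem_filter] at hb
    obtain ⟨hbA, hbI⟩ := hb
    rw [mem_Ico]
    constructor
    · rw [← hbI]
      exact Nat.div_mul_le_self _ _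
    · have h3 : idx A b / u < I + 1 := by
        show blk A u b < I + 1
        rw [hbI]
        exact Nat.lt_succ_self I
      have h4 := (Nat.div_lt_iff_lt_mul hu).mp h3
      rw [Nat.succ_mul] at h4
      exact h4
  have hinj : Set.InjOn (idx A) ↑(A.filter fun b => blk A u b = I) := by
    intro a ha b hb h
    rw [Finset.mem_coe, mem_filter] at ha hb
    exact idx_injOn ha.1 hb.1 h
  have h := card_le_card_of_injOn (idx A) hmap hinj
  rwa [Nat.card_Ico, Nat.add_sub_cancel_left] at h

end AAAux

end AAAux

open AAAux

set_option maxHeartbeats 2000000 in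
theorem product_plus_A_threshold :
    ∃ c : ℝ, 0 < c ∧ ∀ A : Finset ℝ, A.Nonempty → (∀ a ∈ A, 0 < a) →
      c * (A.card : ℝ) ^ ((3 : ℝ) / 2) ≤
        ((Finset.image₂ (· + ·) (Finset.image₂ (· * ·) A A) A).card : ℝ) := by
  refine ⟨1/20, by norm_num, ?_⟩
  intro A hA hpos
  classical
  set n := A.card with hn
  have hn1 : 1 ≤ n := card_pos.mpr hA
  set s := Nat.sqrt n with hs
  set u := s + 1 with hu
  have hu0 : 0 < u := Nat.succ_pos _
  set B := (n - 1) / u + 1 with hB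
  have hBpos : 1 ≤ B := by rw [hB]; exact Nat.le_add_left 1 _
  set D := Finset.image₂ (· + ·) (Finset.image₂ (· * ·) A A) A with hD
  set K := D.card with hK
  set G := A ×ˢ A with hG
  have hGcard : G.card = n ^ 2 := by
    rw [hG, card_product, ← hn]; ring
  set ψ : ℝ → ℝ × ℝ → ℕ × ℕ × ℝ :=
    fun x p => (blk A u p.1, blk A u p.2, x * p.1 + p.2) with hψ
  set q : ℝ → ℕ :=
    fun x => ((G ×ˢ G).filter fun pq => ψ x pq.1 = ψ x pq.2).card with hq
  -- blk bound
  have hblkB : ∀ a ∈ A, blk A u a ≤ B - 1 := by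
    intro a ha
    have h := blk_le ha u
    rw [← hn] at h
    rw [hB]
    simpa using h
  -- Step C : same-block pairs
  set SB := (A ×ˢ A).filter (fun pq => blk A u pq.1 = blk A u pq.2) with hSB
  have hSBcard : SB.card ≤ n * u := by
    have hfib : ∀ pq ∈ SB, pq.1 ∈ A := by
      intro pq hpq
      rw [hSB, mem_filter, mem_product] at hpq
      exact hpq.1.1
    rw [card_eq_sum_card_fiberwise hfib]
    have hbound : ∀ a ∈ A, (SB.filter fun pq => pq.1 = a).card ≤ u := by
      intro a ha
      have hmap : ∀ pq ∈ SB.filter (fun pq => pq.1 = a),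
          pq.2 ∈ A.filter (fun b => blk A u b = blk A u a) := by
        intro pq hpq
        rw [mem_filter] at hpq
        obtain ⟨hpq1, hpqa⟩ := hpq
        rw [hSB, mem_filter, mem_product] at hpq1
        refine mem_filter.mpr ⟨hpq1.1.2, ?_⟩
        rw [← hpqa]
        exact hpq1.2.symm
      have hinj : Set.InjOn (Prod.snd : ℝ × ℝ → ℝ) ↑(SB.filter fun pq => pq.1 = a) := by
        intro p hp p' hp' hsnd
        rw [Finset.mem_coe, mem_filter] at hp hp'
        exact Prod.ext (hp.2.trans hp'.2.symm) hsnd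
      calc (SB.filter fun pq => pq.1 = a).card
          ≤ (A.filter fun b => blk A u b = blk A u a).card :=
            card_le_card_of_injOn _ hmap hinj
        _ ≤ u := card_blk_fiber_le hu0 _
    calc ∑ a ∈ A, (SB.filter fun pq => pq.1 = a).card ≤ ∑ a ∈ A, u :=
          Finset.sum_le_sum hbound
      _ = n * u := by rw [Finset.sum_const, smul_eq_mul, ← hn]
  -- Step D : Cauchy-Schwarz lower bound for each x
  have hCS : ∀ x ∈ A, (n:ℝ)^4 ≤ ((G.image (ψ x)).card : ℝ) * (q x : ℝ) := by
    intro x hx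
    have h1 : ∑ v ∈ G.image (ψ x), (G.filter fun p => ψ x p = v).card = n ^ 2 := by
      rw [← hGcard]
      exact (card_eq_sum_card_fiberwise (fun p hp => mem_image_of_mem _ hp)).symm
    have h2 : q x = ∑ v ∈ G.image (ψ x), ((G.filter fun p => ψ x p = v).card) ^ 2 := by
      have hdecomp : ((G ×ˢ G).filter fun pq => ψ x pq.1 = ψ x pq.2)
          = (G.image (ψ x)).biUnion
            (fun v => (G.filter fun p => ψ x p = v) ×ˢ (G.filter fun p => ψ x p = v)) := by
        ext pq
        simp only [mem_filter, mem_product, mem_biUnion, mem_image]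
        constructor
        · rintro ⟨⟨h1G, h2G⟩, heq⟩
          exact ⟨ψ x pq.1, ⟨pq.1, h1G, rfl⟩, ⟨h1G, rfl⟩, ⟨h2G, heq.symm⟩⟩
        · rintro ⟨v, _, ⟨h1G, hv1⟩, h2G, hv2⟩
          exact ⟨⟨h1G, h2G⟩, by rw [hv1, hv2]⟩
      have hdisj : ∀ v₁ ∈ G.image (ψ x), ∀ v₂ ∈ G.image (ψ x), v₁ ≠ v₂ → Disjoint
          ((G.filter fun p => ψ x p = v₁) ×ˢ (G.filter fun p => ψ x p = v₁))
          ((G.filter fun p => ψ x p = v₂) ×ˢ (G.filter fun p => ψ x p = v₂)) := by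
        intro v₁ _ v₂ _ hne
        rw [Finset.disjoint_left]
        intro pq hpq1 hpq2
        rw [mem_product, mem_filter] at hpq1 hpq2
        exact hne (hpq1.1.2.symm.trans hpq2.1.2)
      simp only [hq]
      rw [hdecomp, card_biUnion hdisj]
      apply Finset.sum_congr rfl
      intro v _
      rw [card_product, sq]
    have hcs := sq_sum_le_card_mul_sum_sq (s := G.image (ψ x))
      (f := fun v => (((G.filter fun p => ψ x p = v).card : ℕ) : ℝ))
    have hsum : ∑ v ∈ G.image (ψ x), (((G.filter fun p => ψ x p = v).card : ℕ) : ℝ)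
        = (n:ℝ)^2 := by
      rw [← Nat.cast_sum, h1]
      push_cast
      ring
    rw [hsum] at hcs
    have hq2 : (q x : ℝ)
        = ∑ v ∈ G.image (ψ x), (((G.filter fun p => ψ x p = v).card : ℕ) : ℝ)^2 := by
      rw [h2]
      push_cast
      ring
    rw [hq2]
    calc (n:ℝ)^4 = ((n:ℝ)^2)^2 := by ring
      _ ≤ _ := hcs
  -- Step E : staircase bound on the image of ψ x
  have hstair : ∀ x ∈ A, (G.image (ψ x)).card ≤ K * (2 * B) := by
    intro x hx
    have hxpos : 0 < x := hpos x hx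
    set θ : ℕ × ℕ × ℝ → ℝ × ℕ := fun k => (k.2.2, k.1 + (B - 1 - k.2.1)) with hθ
    have hmap : ∀ k ∈ G.image (ψ x), θ k ∈ D ×ˢ Finset.range (2 * B) := by
      intro k hk
      rw [mem_image] at hk
      obtain ⟨p, hp, rfl⟩ := hk
      rw [hG, mem_product] at hp
      rw [mem_product]
      constructor
      · show (θ (ψ x p)).1 ∈ D
        simp only [hθ, hψ]
        rw [hD]
        exact mem_image₂_of_mem (mem_image₂_of_mem hx hp.1) hp.2
      · rw [mem_range]
        show (θ (ψ x p)).2 < 2 * B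
        simp only [hθ, hψ]
        have h1 := hblkB p.1 hp.1
        have h2 := hblkB p.2 hp.2
        omega
    have hinj : Set.InjOn θ ↑(G.image (ψ x)) := by
      intro k hk k' hk' hθeq
      rw [Finset.mem_coe, mem_image] at hk hk'
      obtain ⟨p, hp, rfl⟩ := hk
      obtain ⟨p', hp', rfl⟩ := hk'
      rw [hG, mem_product] at hp hp'
      simp only [hθ, hψ, Prod.mk.injEq] at hθeq
      obtain ⟨hveq, hsumeq⟩ := hθeq
      have hb2 := hblkB p.2 hp.2
      have hb2' := hblkB p'.2 hp'.2
      simp only [hψ, Prod.mk.injEq]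
      rcases lt_trichotomy p.1 p'.1 with h1 | h1 | h1
      · have hc : p'.2 < p.2 := by nlinarith
        have hI : blk A u p.1 ≤ blk A u p'.1 := blk_mono hp.1 hp'.1 (le_of_lt h1) u
        have hJ : blk A u p'.2 ≤ blk A u p.2 := blk_mono hp'.2 hp.2 (le_of_lt hc) u
        refine ⟨by omega, by omega, hveq⟩
      · have hc : p.2 = p'.2 := by
          have hxx : x * p.1 = x * p'.1 := by rw [h1]
          linarith
        exact ⟨by rw [h1], by rw [hc], hveq⟩
      · have hc : p.2 < p'.2 := by nlinarith
        have hI : blk A u p'.1 ≤ blk A u p.1 := blk_mono hp'.1 hp.1 (le_of_lt h1) u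
        have hJ : blk A u p.2 ≤ blk A u p'.2 := blk_mono hp.2 hp'.2 (le_of_lt hc) u
        refine ⟨by omega, by omega, hveq⟩
    calc (G.image (ψ x)).card ≤ (D ×ˢ Finset.range (2 * B)).card :=
          card_le_card_of_injOn _ hmap hinj
      _ = K * (2 * B) := by rw [card_product, card_range, ← hK]
  -- Step F+G : upper bound for the sum over x
  have hupper : ∑ x ∈ A, q x ≤ n ^ 3 + (n * u) ^ 2 := by
    have hsplit : ∀ x : ℝ, q x
        = (((G ×ˢ G).filter fun pq => ψ x pq.1 = ψ x pq.2).filter fun pq => pq.1 = pq.2).card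
        + (((G ×ˢ G).filter fun pq => ψ x pq.1 = ψ x pq.2).filter fun pq => ¬ pq.1 = pq.2).card := by
      intro x
      simp only [hq]
      exact (card_filter_add_card_filter_not _).symm
    have hdiag : ∀ x : ℝ, (((G ×ˢ G).filter fun pq => ψ x pq.1 = ψ x pq.2).filter
        fun pq => pq.1 = pq.2).card ≤ n ^ 2 := by
      intro x
      have hmap : ∀ pq ∈ ((G ×ˢ G).filter fun pq => ψ x pq.1 = ψ x pq.2).filter
          (fun pq => pq.1 = pq.2), pq.1 ∈ G := by
        intro pq hpq
        rw [mem_filter, mem_filter, mem_product] at hpq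
        exact hpq.1.1.1
      have hinj : Set.InjOn (Prod.fst : (ℝ × ℝ) × (ℝ × ℝ) → ℝ × ℝ)
          ↑(((G ×ˢ G).filter fun pq => ψ x pq.1 = ψ x pq.2).filter (fun pq => pq.1 = pq.2)) := by
        intro p hp p' hp' hfst
        rw [Finset.mem_coe, mem_filter] at hp hp'
        exact Prod.ext hfst ((hp.2.symm.trans hfst).trans hp'.2)
      calc _ ≤ G.card := card_le_card_of_injOn _ hmap hinj
        _ = n ^ 2 := hGcard
    set Off : ℝ → Finset ((ℝ × ℝ) × (ℝ × ℝ)) :=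
      fun x => ((G ×ˢ G).filter fun pq => ψ x pq.1 = ψ x pq.2).filter fun pq => ¬ pq.1 = pq.2
      with hOff
    have hoff : ∑ x ∈ A, (Off x).card ≤ (n * u) ^ 2 := by
      rw [← Finset.card_sigma]
      have hmap : ∀ z ∈ A.sigma Off,
          ((z.2.1.1, z.2.2.1), (z.2.1.2, z.2.2.2)) ∈ SB ×ˢ SB := by
        intro z hz
        rw [Finset.mem_sigma] at hz
        obtain ⟨hzA, hz2⟩ := hz
        simp only [hOff, mem_filter, mem_product] at hz2
        obtain ⟨⟨⟨hp, hq'⟩, heq⟩, hne⟩ := hz2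
        rw [hG, mem_product] at hp hq'
        simp only [hψ, Prod.mk.injEq] at heq
        obtain ⟨heq1, heq2, _⟩ := heq
        rw [mem_product]
        constructor
        · rw [hSB, mem_filter, mem_product]
          exact ⟨⟨hp.1, hq'.1⟩, heq1⟩
        · rw [hSB, mem_filter, mem_product]
          exact ⟨⟨hp.2, hq'.2⟩, heq2⟩
      have hinj : Set.InjOn (fun z : (_ : ℝ) × ((ℝ × ℝ) × (ℝ × ℝ)) =>
          ((z.2.1.1, z.2.2.1), (z.2.1.2, z.2.2.2))) ↑(A.sigma Off) := by
        intro z hz z' hz' heq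
        rw [Finset.mem_coe, Finset.mem_sigma] at hz hz'
        obtain ⟨hzA, hz2⟩ := hz
        obtain ⟨hz'A, hz'2⟩ := hz'
        simp only [Prod.mk.injEq] at heq
        obtain ⟨⟨e11, e21⟩, e12, e22⟩ := heq
        have hpair : z.2 = z'.2 := by
          apply Prod.ext
          · exact Prod.ext e11 e12
          · exact Prod.ext e21 e22
        simp only [hOff, mem_filter] at hz2 hz'2
        obtain ⟨⟨_, heqψ⟩, hne⟩ := hz2
        obtain ⟨⟨_, heqψ'⟩, hne'⟩ := hz'2
        simp only [hψ, Prod.mk.injEq] at heqψ heqψ'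
        have hv : z.1 * z.2.1.1 + z.2.1.2 = z.1 * z.2.2.1 + z.2.2.2 := heqψ.2.2
        have hv' : z'.1 * z'.2.1.1 + z'.2.1.2 = z'.1 * z'.2.2.1 + z'.2.2.2 := heqψ'.2.2
        rw [← hpair] at hv'
        have hne1 : z.2.1.1 ≠ z.2.2.1 := by
          intro hcontra
          apply hne
          apply Prod.ext hcontra
          have hxx : z.1 * z.2.1.1 = z.1 * z.2.2.1 := by rw [hcontra]
          linarith
        have hxeq : z.1 = z'.1 := by
          have hfactor : (z.1 - z'.1) * (z.2.1.1 - z.2.2.1) = 0 := by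
            linear_combination hv - hv'
          rcases mul_eq_zero.mp hfactor with h | h
          · linarith
          · exact absurd (by linarith : z.2.1.1 = z.2.2.1) hne1
        exact Sigma.ext hxeq (heq_of_eq hpair)
      calc (A.sigma Off).card ≤ (SB ×ˢ SB).card := card_le_card_of_injOn _ hmap hinj
        _ = SB.card * SB.card := card_product _ _
        _ ≤ (n * u) * (n * u) := Nat.mul_le_mul hSBcard hSBcard
        _ = (n * u) ^ 2 := (sq _).symm
    calc ∑ x ∈ A, q x
        = ∑ x ∈ A, ((((G ×ˢ G).filter fun pq => ψ x pq.1 = ψ x pq.2).filter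
            fun pq => pq.1 = pq.2).card + (Off x).card) := by
          exact Finset.sum_congr rfl (fun x _ => hsplit x)
      _ = (∑ x ∈ A, (((G ×ˢ G).filter fun pq => ψ x pq.1 = ψ x pq.2).filter
            fun pq => pq.1 = pq.2).card) + ∑ x ∈ A, (Off x).card := Finset.sum_add_distrib
      _ ≤ (∑ _x ∈ A, n ^ 2) + (n * u) ^ 2 :=
          Nat.add_le_add (Finset.sum_le_sum (fun x _ => hdiag x)) hoff
      _ = n * n ^ 2 + (n * u) ^ 2 := by rw [Finset.sum_const, smul_eq_mul, ← hn]
      _ = n ^ 3 + (n * u) ^ 2 := by ring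
  -- put together : n^5 ≤ K * (2*B) * (n^3 + (n*u)^2) over ℝ
  have hmain : (n:ℝ)^5 ≤ (K : ℝ) * (2 * B) * ((n:ℝ)^3 + ((n:ℝ) * u)^2) := by
    have hlow : ∀ x ∈ A, (n:ℝ)^4 ≤ ((K * (2 * B) : ℕ) : ℝ) * (q x : ℝ) := by
      intro x hx
      calc (n:ℝ)^4 ≤ ((G.image (ψ x)).card : ℝ) * (q x : ℝ) := hCS x hx
        _ ≤ ((K * (2 * B) : ℕ) : ℝ) * (q x : ℝ) := by
            apply mul_le_mul_of_nonneg_right _ (Nat.cast_nonneg _)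
            exact_mod_cast hstair x hx
    have hsum : (n:ℝ) * (n:ℝ)^4 ≤ ((K * (2 * B) : ℕ) : ℝ) * ∑ x ∈ A, (q x : ℝ) := by
      calc (n:ℝ) * (n:ℝ)^4 = ∑ _x ∈ A, (n:ℝ)^4 := by
            rw [Finset.sum_const, nsmul_eq_mul, ← hn]
      _ ≤ ∑ x ∈ A, ((K * (2 * B) : ℕ) : ℝ) * (q x : ℝ) := Finset.sum_le_sum hlow
      _ = ((K * (2 * B) : ℕ) : ℝ) * ∑ x ∈ A, (q x : ℝ) := by rw [Finset.mul_sum]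
    have hupperR : ∑ x ∈ A, (q x : ℝ) ≤ (n:ℝ)^3 + ((n:ℝ) * u)^2 := by
      have hc : ((∑ x ∈ A, q x : ℕ) : ℝ) ≤ ((n ^ 3 + (n * u) ^ 2 : ℕ) : ℝ) := by
        exact_mod_cast hupper
      rw [Nat.cast_sum] at hc
      calc ∑ x ∈ A, (q x : ℝ) ≤ ((n ^ 3 + (n * u) ^ 2 : ℕ) : ℝ) := hc
        _ = (n:ℝ)^3 + ((n:ℝ) * u)^2 := by push_cast; ring
    calc (n:ℝ)^5 = (n:ℝ) * (n:ℝ)^4 := by ring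
      _ ≤ ((K * (2 * B) : ℕ) : ℝ) * ∑ x ∈ A, (q x : ℝ) := hsum
      _ ≤ ((K * (2 * B) : ℕ) : ℝ) * ((n:ℝ)^3 + ((n:ℝ) * u)^2) :=
          mul_le_mul_of_nonneg_left hupperR (Nat.cast_nonneg _)
      _ = (K : ℝ) * (2 * B) * ((n:ℝ)^3 + ((n:ℝ) * u)^2) := by push_cast; ring
  -- numeric estimates
  have hs1 : 1 ≤ s := by
    rw [hs]
    exact Nat.sqrt_pos.mpr hn1
  have hss : s * s ≤ n := by
    rw [hs]
    have h := Nat.sqrt_le' n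
    nlinarith
  have h1 : n - 1 < u * u := by
    rw [hu, hs]
    have h := Nat.lt_succ_sqrt n
    rw [Nat.succ_eq_add_one] at h
    omega
  have hBu : B ≤ u := by
    rw [hB]
    exact Nat.succ_le_of_lt (Nat.div_lt_of_lt_mul h1)
  have hu2 : u ^ 2 ≤ 4 * n := by
    rw [hu]
    nlinarith
  -- real versions
  have hsqrts : (s : ℝ) ≤ Real.sqrt n := by
    rw [show (s:ℝ) = Real.sqrt ((s:ℝ)^2) from (Real.sqrt_sq (Nat.cast_nonneg s)).symm]
    apply Real.sqrt_le_sqrt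
    have hcast : ((s * s : ℕ) : ℝ) ≤ (n : ℝ) := by exact_mod_cast hss
    push_cast at hcast
    nlinarith
  have hsqrt1 : 1 ≤ Real.sqrt n := by
    rw [show (1:ℝ) = Real.sqrt 1 from Real.sqrt_one.symm]
    apply Real.sqrt_le_sqrt
    exact_mod_cast hn1
  have huR : (u : ℝ) ≤ 2 * Real.sqrt n := by
    rw [hu]
    push_cast
    linarith
  have hn0R : (0:ℝ) < (n:ℝ) := by exact_mod_cast hn1
  have hK0 : (0:ℝ) ≤ (K:ℝ) := Nat.cast_nonneg _
  have hfinal : (n:ℝ)^5 ≤ 20 * (K:ℝ) * Real.sqrt n * (n:ℝ)^3 := by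
    have hBuR : (B : ℝ) ≤ (u : ℝ) := by exact_mod_cast hBu
    have hu2R : ((u:ℝ))^2 ≤ 4 * (n:ℝ) := by exact_mod_cast hu2
    have hbound : (n:ℝ)^3 + ((n:ℝ) * u)^2 ≤ 5 * (n:ℝ)^3 := by
      have h4 : ((n:ℝ))^2 * ((u:ℝ)^2) ≤ ((n:ℝ))^2 * (4*(n:ℝ)) :=
        mul_le_mul_of_nonneg_left hu2R (by positivity)
      nlinarith [h4]
    have hu0R : (0:ℝ) ≤ (u:ℝ) := Nat.cast_nonneg _
    calc (n:ℝ)^5 ≤ (K : ℝ) * (2 * B) * ((n:ℝ)^3 + ((n:ℝ) * u)^2) := hmain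
      _ ≤ (K : ℝ) * (2 * u) * (5 * (n:ℝ)^3) := by
          apply mul_le_mul
          · apply mul_le_mul_of_nonneg_left _ hK0
            linarith
          · exact hbound
          · positivity
          · positivity
      _ ≤ (K : ℝ) * (2 * (2 * Real.sqrt n)) * (5 * (n:ℝ)^3) := by
          apply mul_le_mul_of_nonneg_right _ (by positivity)
          apply mul_le_mul_of_nonneg_left _ hK0
          linarith
      _ = 20 * (K:ℝ) * Real.sqrt n * (n:ℝ)^3 := by ring
  have hpow : (n:ℝ) ^ ((3:ℝ)/2) * (Real.sqrt n * (n:ℝ)^3) = (n:ℝ)^5 := by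
    rw [Real.sqrt_eq_rpow]
    rw [show ((n:ℝ)^3 : ℝ) = (n:ℝ) ^ ((3:ℕ):ℝ) from (Real.rpow_natCast _ 3).symm]
    rw [show ((n:ℝ)^5 : ℝ) = (n:ℝ) ^ ((5:ℕ):ℝ) from (Real.rpow_natCast _ 5).symm]
    rw [← Real.rpow_add hn0R, ← Real.rpow_add hn0R]
    norm_num
  have hsqrtpos : (0:ℝ) < Real.sqrt n * (n:ℝ)^3 := by positivity
  show (1/20 : ℝ) * (n : ℝ) ^ ((3:ℝ)/2) ≤ (K : ℝ)
  have h20 : (n:ℝ) ^ ((3:ℝ)/2) * (Real.sqrt n * (n:ℝ)^3)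
      ≤ 20 * (K:ℝ) * (Real.sqrt n * (n:ℝ)^3) := by
    rw [hpow]
    calc (n:ℝ)^5 ≤ 20 * (K:ℝ) * Real.sqrt n * (n:ℝ)^3 := hfinal
      _ = 20 * (K:ℝ) * (Real.sqrt n * (n:ℝ)^3) := by ring
  have hfin := (mul_le_mul_iff_of_pos_right hsqrtpos).mp h20
  linarith
end

section
/- Let f : ℝ → ℝ be strictly convex (or strictly concave) and let X, Y, Z be finite nonempty sets of reals. Then |f(X) + Y| · |X + Z| ≫ |X|^{3/2} · |Y|^{1/2} · |Z|^{1/2}, with an absolute implied constant. -/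
open Finset

section aux
variable {f : ℝ → ℝ}

lemma enr_slope3 (hf : StrictConvexOn ℝ Set.univ f) {a b c : ℝ} (hab : a < b) (hbc : b < c) :
    (f b - f a) / (b - a) < (f c - f b) / (c - b) :=
  hf.slope_strict_mono_adjacent (Set.mem_univ a) (Set.mem_univ c) hab hbc

lemma enr_mid_lt_max (hf : StrictConvexOn ℝ Set.univ f) {a b c : ℝ} (hab : a < b)
    (hbc : b < c) : f b < max (f a) (f c) := by
  by_contra h
  push_neg at h
  rw [max_le_iff] at h
  have h1 := enr_slope3 hf hab hbc
  have h2 : (0:ℝ) ≤ (f b - f a) / (b - a) := div_nonneg (by linarith [h.1]) (by linarith)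
  have h3 : (f c - f b) / (c - b) ≤ 0 :=
    div_nonpos_of_nonpos_of_nonneg (by linarith [h.2]) (by linarith)
  linarith

lemma enr_diff_lt (hf : StrictConvexOn ℝ Set.univ f) {a b c d : ℝ} (hab : a < b) (hcd : c < d)
    (hac : a < c) (hbd : b < d) (hlen : b - a = d - c) : f b - f a < f d - f c := by
  rcases lt_trichotomy b c with h | h | h
  · have h3 : (f b - f a) / (b - a) < (f d - f c) / (d - c) :=
      lt_trans (enr_slope3 hf hab h) (enr_slope3 hf h hcd)
    rw [hlen] at h3
    have hdc : (0:ℝ) < d - c := by linarith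
    rw [div_lt_div_iff_of_pos_right hdc] at h3
    exact h3
  · subst h
    have h1 := enr_slope3 hf hab hbd
    have hlen2 : b - a = d - b := by linarith
    rw [hlen2] at h1
    have hdb : (0:ℝ) < d - b := by linarith
    rw [div_lt_div_iff_of_pos_right hdb] at h1
    exact h1
  · -- a < c < b < d
    have hca : (0:ℝ) < c - a := by linarith
    have hbc : (0:ℝ) < b - c := by linarith
    have hdb : (0:ℝ) < d - b := by linarith
    have i1 : (f c - f a) * (b - c) < (f b - f c) * (c - a) :=
      (div_lt_div_iff₀ hca hbc).mp (enr_slope3 hf hac h)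
    have hAC : c - a = d - b := by linarith
    have i2' : (f b - f c) * (c - a) < (f d - f b) * (b - c) := by
      have h2 := (div_lt_div_iff₀ hbc hdb).mp (enr_slope3 hf h hbd)
      rw [← hAC] at h2
      exact h2
    have i3 : (f c - f a) * (b - c) < (f d - f b) * (b - c) := lt_trans i1 i2'
    have := lt_of_mul_lt_mul_right i3 (le_of_lt hbc)
    linarith
end aux
section rank
open Finset

/-- rank of `u` in `S`: number of elements of `S` that are `≤ u`. -/
noncomputable def enrRk (S : Finset ℝ) (u : ℝ) : ℕ := (S.filter (· ≤ u)).card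

lemma enrRk_mono (S : Finset ℝ) {u v : ℝ} (h : u ≤ v) : enrRk S u ≤ enrRk S v :=
  Finset.card_le_card (Finset.monotone_filter_right S (fun x _ hx => le_trans hx h))

lemma enrRk_le (S : Finset ℝ) (u : ℝ) : enrRk S u ≤ S.card :=
  Finset.card_le_card (Finset.filter_subset _ _)

lemma enrRk_pos (S : Finset ℝ) {u : ℝ} (hu : u ∈ S) : 1 ≤ enrRk S u :=
  Finset.card_pos.mpr ⟨u, Finset.mem_filter.mpr ⟨hu, le_refl u⟩⟩

lemma enrRk_lt (S : Finset ℝ) {u v : ℝ} (huv : u < v) (hv : v ∈ S) :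
    enrRk S u < enrRk S v := by
  apply Finset.card_lt_card
  constructor
  · exact Finset.monotone_filter_right S (fun x _ hx => le_trans hx (le_of_lt huv))
  · intro hsub
    have hv' : v ∈ S.filter (· ≤ v) := Finset.mem_filter.mpr ⟨hv, le_refl v⟩
    have := Finset.mem_filter.mp (hsub hv')
    exact absurd this.2 (not_le.mpr huv)

lemma enrRk_injOn (S : Finset ℝ) {u v : ℝ} (hu : u ∈ S) (hv : v ∈ S)
    (h : enrRk S u = enrRk S v) : u = v := by
  rcases lt_trichotomy u v with hlt | he | hlt
  · exact absurd h (Nat.ne_of_lt (enrRk_lt S hlt hv))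
  · exact he
  · exact absurd h.symm (Nat.ne_of_lt (enrRk_lt S hlt hu))

lemma enr_closePairs_card (S : Finset ℝ) (Δ : ℕ) :
    ((S ×ˢ S).filter
      (fun p => enrRk S p.1 < enrRk S p.2 ∧ enrRk S p.2 ≤ enrRk S p.1 + Δ)).card
      ≤ S.card * Δ :=
  calc ((S ×ˢ S).filter
      (fun p => enrRk S p.1 < enrRk S p.2 ∧ enrRk S p.2 ≤ enrRk S p.1 + Δ)).card
      ≤ (S ×ˢ Finset.Icc 1 Δ).card := by
        apply Finset.card_le_card_of_injOn
          (fun p : ℝ × ℝ => (p.1, enrRk S p.2 - enrRk S p.1))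
        · rintro ⟨u, v⟩ hp
          rw [Finset.mem_coe, Finset.mem_filter, Finset.mem_product] at hp
          obtain ⟨⟨hu, hv⟩, h1, h2⟩ := hp
          dsimp only at h1 h2 ⊢
          exact Finset.mem_product.mpr ⟨hu, Finset.mem_Icc.mpr ⟨by omega, by omega⟩⟩
        · rintro ⟨u, v⟩ hp ⟨u', v'⟩ hq he
          simp only [Finset.coe_filter, Set.mem_setOf_eq, Finset.mem_product] at hp hq
          obtain ⟨⟨hu, hv⟩, h1, h2⟩ := hp
          obtain ⟨⟨hu', hv'⟩, h1', h2'⟩ := hq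
          have e1 : u = u' := congrArg Prod.fst he
          have e2 : enrRk S v - enrRk S u = enrRk S v' - enrRk S u' := congrArg Prod.snd he
          have e3 : enrRk S v = enrRk S v' := by subst e1; omega
          have e4 : v = v' := enrRk_injOn S hv hv' e3
          simp [e1, e4]
    _ = S.card * Δ := by rw [Finset.card_product, Nat.card_Icc]; simp

lemma enr_closePairs_card₂ (T : Finset ℝ) (Δ : ℕ) :
    ((T ×ˢ T).filter
      (fun p => (enrRk T p.2 : ℤ) - enrRk T p.1 ≤ Δ ∧ (enrRk T p.1 : ℤ) - enrRk T p.2 ≤ Δ)).card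
      ≤ T.card * (2 * Δ + 1) :=
  calc ((T ×ˢ T).filter
      (fun p => (enrRk T p.2 : ℤ) - enrRk T p.1 ≤ Δ ∧ (enrRk T p.1 : ℤ) - enrRk T p.2 ≤ Δ)).card
      ≤ (T ×ˢ Finset.Icc (-(Δ:ℤ)) Δ).card := by
        apply Finset.card_le_card_of_injOn
          (fun p : ℝ × ℝ => (p.1, (enrRk T p.2 : ℤ) - enrRk T p.1))
        · rintro ⟨u, v⟩ hp
          rw [Finset.mem_coe, Finset.mem_filter, Finset.mem_product] at hp
          obtain ⟨⟨hu, hv⟩, h1, h2⟩ := hp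
          dsimp only at h1 h2 ⊢
          exact Finset.mem_product.mpr ⟨hu, Finset.mem_Icc.mpr ⟨by omega, h1⟩⟩
        · rintro ⟨u, v⟩ hp ⟨u', v'⟩ hq he
          simp only [Finset.coe_filter, Set.mem_setOf_eq, Finset.mem_product] at hp hq
          obtain ⟨⟨hu, hv⟩, -, -⟩ := hp
          obtain ⟨⟨hu', hv'⟩, -, -⟩ := hq
          have e1 : u = u' := congrArg Prod.fst he
          have e2 : (enrRk T v : ℤ) - enrRk T u = (enrRk T v' : ℤ) - enrRk T u' :=
            congrArg Prod.snd he
          have e3 : enrRk T v = enrRk T v' := by subst e1; omega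
          have e4 : v = v' := enrRk_injOn T hv hv' e3
          simp [e1, e4]
    _ = T.card * (2 * Δ + 1) := by
        rw [Finset.card_product, Int.card_Icc]
        congr 1
        omega

end rank
section main
open Finset

lemma enr_fiber_le_two {f : ℝ → ℝ} (hf : StrictConvexOn ℝ Set.univ f) (X : Finset ℝ) (v : ℝ) :
    (X.filter (fun a => f a = v)).card ≤ 2 := by
  classical
  by_contra hcon
  push_neg at hcon
  obtain ⟨a, b, c, ha, hb, hc, hab, hac, hbc⟩ := Finset.two_lt_card_iff.mp hcon
  rw [Finset.mem_filter] at ha hb hc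
  have h3 : ∀ p q r : ℝ, p < q → q < r → f p = v → f q = v → f r = v → False := by
    intro p q r hpq hqr hfp hfq hfr
    have := enr_mid_lt_max hf hpq hqr
    rw [hfp, hfq, hfr] at this
    simp at this
  rcases hab.lt_or_gt with h1 | h1
  · rcases hac.lt_or_gt with h2 | h2
    · rcases hbc.lt_or_gt with h4 | h4
      · exact h3 a b c h1 h4 ha.2 hb.2 hc.2
      · exact h3 a c b h2 h4 ha.2 hc.2 hb.2
    · rcases hbc.lt_or_gt with h4 | h4
      · linarith
      · exact h3 c a b h2 h1 hc.2 ha.2 hb.2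
  · rcases hac.lt_or_gt with h2 | h2
    · rcases hbc.lt_or_gt with h4 | h4
      · exact h3 b a c h1 h2 hb.2 ha.2 hc.2
      · linarith
    · rcases hbc.lt_or_gt with h4 | h4
      · exact h3 b c a h4 h2 hb.2 hc.2 ha.2
      · exact h3 c b a h4 h1 hc.2 hb.2 ha.2

set_option maxHeartbeats 2000000 in
lemma enr_convex (f : ℝ → ℝ) (hf : StrictConvexOn ℝ Set.univ f)
    (X Y Z : Finset ℝ) (hX : X.Nonempty) (hY : Y.Nonempty) (hZ : Z.Nonempty) :
    (1/100 : ℝ) * (X.card : ℝ) ^ ((3:ℝ)/2) * (Y.card : ℝ) ^ ((1:ℝ)/2) *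
        (Z.card : ℝ) ^ ((1:ℝ)/2)
      ≤ ((Finset.image₂ (· + ·) (X.image f) Y).card : ℝ) *
        ((Finset.image₂ (· + ·) X Z).card : ℝ) := by
  classical
  obtain ⟨n, hn⟩ : ∃ n, X.card = n := ⟨_, rfl⟩
  set S : Finset ℝ := Finset.image₂ (· + ·) X Z with hS
  set T : Finset ℝ := Finset.image₂ (· + ·) (X.image f) Y with hT
  obtain ⟨s, hs⟩ : ∃ s, S.card = s := ⟨_, rfl⟩
  obtain ⟨t, ht⟩ : ∃ t, T.card = t := ⟨_, rfl⟩
  obtain ⟨z₀, hz₀⟩ := hZ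
  obtain ⟨y₀, hy₀⟩ := hY
  obtain ⟨x₀, hx₀⟩ := hX
  have hn1 : 1 ≤ n := by rw [← hn]; exact Finset.card_pos.mpr ⟨x₀, hx₀⟩
  -- basic cardinality inequalities
  have hns : n ≤ s := by
    rw [← hn, ← hs]
    apply Finset.card_le_card_of_injOn (fun u => u + z₀)
    · intro u hu; exact Finset.mem_image₂_of_mem hu hz₀
    · intro u _ v _ h; exact add_right_cancel h
  have hzs : Z.card ≤ s := by
    rw [← hs]
    apply Finset.card_le_card_of_injOn (fun z => x₀ + z)
    · intro z hz; exact Finset.mem_image₂_of_mem hx₀ hz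
    · intro u _ v _ h; exact add_left_cancel h
  have hyt : Y.card ≤ t := by
    rw [← ht]
    apply Finset.card_le_card_of_injOn (fun y => f x₀ + y)
    · intro y hy; exact Finset.mem_image₂_of_mem (Finset.mem_image_of_mem f hx₀) hy
    · intro u _ v _ h; exact add_left_cancel h
  have hn2t : n ≤ 2 * t := by
    have h1 : X.card ≤ 2 * (X.image f).card :=
      Finset.card_le_mul_card_image X 2 (fun v _ => enr_fiber_le_two hf X v)
    have h2 : (X.image f).card ≤ t := by
      rw [← ht]
      apply Finset.card_le_card_of_injOn (fun v => v + y₀)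
      · intro v hv; exact Finset.mem_image₂_of_mem hv hy₀
      · intro u _ v _ h; exact add_right_cancel h
    omega
  have hz1 : 1 ≤ Z.card := Finset.card_pos.mpr ⟨z₀, hz₀⟩
  have hy1 : 1 ≤ Y.card := Finset.card_pos.mpr ⟨y₀, hy₀⟩
  have hs1 : 1 ≤ s := le_trans hn1 hns
  have ht1 : 1 ≤ t := le_trans hy1 hyt
  -- the key inequality
  have key : (n:ℝ)^3 * (Y.card:ℝ) * (Z.card:ℝ) ≤ 1152 * ((t:ℝ) * (s:ℝ))^2 := by
    rcases Nat.lt_or_ge n 2 with hsmall | hnge2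
    · -- trivial case n = 1
      have hn_eq : n = 1 := by omega
      have hY' : (Y.card:ℝ) ≤ t := by exact_mod_cast hyt
      have hZ' : (Z.card:ℝ) ≤ s := by exact_mod_cast hzs
      have hy0 : (1:ℝ) ≤ (Y.card:ℝ) := by exact_mod_cast hy1
      have hz0 : (1:ℝ) ≤ (Z.card:ℝ) := by exact_mod_cast hz1
      have hYZts : (Y.card:ℝ) * (Z.card:ℝ) ≤ (t:ℝ) * (s:ℝ) :=
        mul_le_mul hY' hZ' (by linarith) (by linarith)
      have hts1 : (1:ℝ) ≤ (t:ℝ) * (s:ℝ) := by nlinarith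
      rw [hn_eq]
      norm_num
      nlinarith
    · -- main case n ≥ 2
      set k := n - 1 with hkdef
      have hkn : k + 1 = n := by omega
      have hk1 : 1 ≤ k := by omega
      set x : ℕ → ℝ := fun i => if h : i < n then X.orderEmbOfFin hn ⟨i, h⟩ else 0 with hxdef
      have hx_mem : ∀ i, i < n → x i ∈ X := by
        intro i h
        simp only [hxdef, dif_pos h]
        exact Finset.orderEmbOfFin_mem X hn ⟨i, h⟩
      have hx_lt : ∀ i j, i < j → j < n → x i < x j := by
        intro i j hij hjn
        have hin : i < n := lt_trans hij hjn
        simp only [hxdef, dif_pos hin, dif_pos hjn]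
        exact (X.orderEmbOfFin hn).strictMono (by exact Fin.mk_lt_mk.mpr hij)
      set Δ : ℕ := 4 * s / k with hΔdef
      set Δ' : ℕ := 8 * t / k with hΔ'def
      set gZ : ℕ → ℝ → Prop :=
        fun i z => enrRk S (x (i+1) + z) ≤ enrRk S (x i + z) + Δ with hgZdef
      set gY : ℕ → ℝ → Prop := fun i y =>
        (enrRk T (f (x (i+1)) + y) : ℤ) - enrRk T (f (x i) + y) ≤ (Δ':ℤ) ∧
        (enrRk T (f (x i) + y) : ℤ) - enrRk T (f (x (i+1)) + y) ≤ (Δ':ℤ) with hgYdef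
      have hxS : ∀ i, i < n → ∀ z ∈ Z, x i + z ∈ S := fun i h z hz =>
        Finset.mem_image₂_of_mem (hx_mem i h) hz
      have hfT : ∀ i, i < n → ∀ y ∈ Y, f (x i) + y ∈ T := fun i h y hy =>
        Finset.mem_image₂_of_mem (Finset.mem_image_of_mem f (hx_mem i h)) hy
      set G := (Finset.range k).sigma
        (fun i => (Z.filter (gZ i)) ×ˢ (Y.filter (gY i))) with hGdef
      -- upper bound for G
      have hGup : G.card ≤ (s * Δ) * (t * (2 * Δ' + 1)) := by
        set P₁ := (S ×ˢ S).filter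
          (fun p => enrRk S p.1 < enrRk S p.2 ∧ enrRk S p.2 ≤ enrRk S p.1 + Δ) with hP₁def
        set P₂ := (T ×ˢ T).filter
          (fun p => (enrRk T p.2 : ℤ) - enrRk T p.1 ≤ (Δ':ℤ) ∧
            (enrRk T p.1 : ℤ) - enrRk T p.2 ≤ (Δ':ℤ)) with hP₂def
        have step : G.card ≤ (P₁ ×ˢ P₂).card := by
          apply Finset.card_le_card_of_injOn
            (fun w : Σ _ : ℕ, ℝ × ℝ =>
              ((x w.1 + w.2.1, x (w.1+1) + w.2.1), (f (x w.1) + w.2.2, f (x (w.1+1)) + w.2.2)))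
          · rintro ⟨i, z, y⟩ hw
            dsimp only
            rw [Finset.mem_coe, hGdef, Finset.mem_sigma] at hw
            obtain ⟨hik, hzy⟩ := hw
            rw [Finset.mem_product, Finset.mem_filter, Finset.mem_filter] at hzy
            obtain ⟨⟨hzZ, hgz⟩, hyY, hgy⟩ := hzy
            dsimp only at hzZ hgz hyY hgy hik
            have hik' : i < k := Finset.mem_range.mp hik
            have hi_n : i < n := by omega
            have hi1_n : i + 1 < n := by omega
            rw [Finset.mem_coe, Finset.mem_product, hP₁def, hP₂def, Finset.mem_filter, Finset.mem_filter,
              Finset.mem_product, Finset.mem_product]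
            dsimp only
            refine ⟨⟨⟨hxS i hi_n z hzZ, hxS (i+1) hi1_n z hzZ⟩, ?_, hgz⟩,
                   ⟨⟨hfT i hi_n y hyY, hfT (i+1) hi1_n y hyY⟩, hgy.1, hgy.2⟩⟩
            apply enrRk_lt S _ (hxS (i+1) hi1_n z hzZ)
            have := hx_lt i (i+1) (by omega) hi1_n
            linarith
          · rintro ⟨i, z, y⟩ hw ⟨j, z', y'⟩ hw' he
            have hw1 := Finset.mem_coe.mp hw
            have hw1' := Finset.mem_coe.mp hw'
            rw [hGdef, Finset.mem_sigma] at hw1 hw1'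
            have hik : i < k := Finset.mem_range.mp hw1.1
            have hjk : j < k := Finset.mem_range.mp hw1'.1
            dsimp only at he
            simp only [Prod.mk.injEq] at he
            obtain ⟨⟨e1, e2⟩, e3, e4⟩ := he
            have symmcase : ∀ i' j' (zz zz' yy yy' : ℝ), i' < k → j' < k → i' < j' →
                x i' + zz = x j' + zz' → x (i'+1) + zz = x (j'+1) + zz' →
                f (x i') + yy = f (x j') + yy' → f (x (i'+1)) + yy = f (x (j'+1)) + yy' →
                False := by
              intro i' j' zz zz' yy yy' hik' hjk' hij' e1' e2' e3' e4'
              have hi1n : i' + 1 < n := by omega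
              have hj1n : j' + 1 < n := by omega
              have hjn : j' < n := by omega
              have hlt := enr_diff_lt hf (hx_lt i' (i'+1) (by omega) hi1n)
                (hx_lt j' (j'+1) (by omega) hj1n) (hx_lt i' j' hij' hjn)
                (hx_lt (i'+1) (j'+1) (by omega) hj1n) (by linarith)
              linarith
            have hij : i = j := by
              by_contra hne
              rcases Nat.lt_or_ge i j with hlt | hge
              · exact symmcase i j z z' y y' hik hjk hlt e1 e2 e3 e4
              · have hji : j < i := by omega
                exact symmcase j i z' z y' y hjk hik hji e1.symm e2.symm e3.symm e4.symm
            subst hij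
            have hzz : z = z' := by linarith
            have hyy : y = y' := by linarith
            subst hzz; subst hyy
            rfl
        calc G.card ≤ (P₁ ×ˢ P₂).card := step
          _ = P₁.card * P₂.card := Finset.card_product _ _
          _ ≤ (S.card * Δ) * (T.card * (2 * Δ' + 1)) :=
              Nat.mul_le_mul (enr_closePairs_card S Δ) (enr_closePairs_card₂ T Δ')
          _ = (s * Δ) * (t * (2 * Δ' + 1)) := by rw [hs, ht]
      -- div-mod facts
      have hDk : 4 * s < k * (Δ + 1) := by
        have hdm := Nat.div_add_mod (4*s) k
        have hmod : (4*s) % k < k := Nat.mod_lt _ (by omega)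
        calc 4 * s = k * Δ + (4*s) % k := by rw [hΔdef]; omega
        _ < k * Δ + k := Nat.add_lt_add_left hmod _
        _ = k * (Δ + 1) := by ring
      have hD'k : 8 * t < k * (Δ' + 1) := by
        have hdm := Nat.div_add_mod (8*t) k
        have hmod : (8*t) % k < k := Nat.mod_lt _ (by omega)
        calc 8 * t = k * Δ' + (8*t) % k := by rw [hΔ'def]; omega
        _ < k * Δ' + k := Nat.add_lt_add_left hmod _
        _ = k * (Δ' + 1) := by ring
      -- bad indices for each z
      have hbadZ : ∀ z ∈ Z, ((Finset.range k).filter (fun i => ¬ gZ i z)).card * 4 ≤ k := by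
        intro z hz
        set B := (Finset.range k).filter (fun i => ¬ gZ i z) with hBdef
        have hterm : ∀ i ∈ B, ((Δ:ℤ)+1) ≤
            (enrRk S (x (i+1) + z) : ℤ) - (enrRk S (x i + z) : ℤ) := by
          intro i hi
          rw [hBdef, Finset.mem_filter] at hi
          have hgz : ¬ gZ i z := hi.2
          rw [hgZdef] at hgz
          push_neg at hgz
          omega
        have hsumZ : (B.card : ℤ) * ((Δ:ℤ) + 1) ≤ (s:ℤ) := by
          calc (B.card:ℤ) * ((Δ:ℤ)+1) = ∑ _i ∈ B, ((Δ:ℤ)+1) := by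
                rw [Finset.sum_const, nsmul_eq_mul]
          _ ≤ ∑ i ∈ B, ((enrRk S (x (i+1) + z) : ℤ) - (enrRk S (x i + z) : ℤ)) :=
              Finset.sum_le_sum hterm
          _ ≤ ∑ i ∈ Finset.range k,
                ((enrRk S (x (i+1) + z) : ℤ) - (enrRk S (x i + z) : ℤ)) := by
              apply Finset.sum_le_sum_of_subset_of_nonneg
                (by rw [hBdef]; exact Finset.filter_subset _ _)
              intro i hi _
              have hi' : i < k := Finset.mem_range.mp hi
              have hmono : enrRk S (x i + z) ≤ enrRk S (x (i+1) + z) := by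
                apply enrRk_mono
                have := hx_lt i (i+1) (by omega) (by omega)
                linarith
              omega
          _ = (enrRk S (x k + z) : ℤ) - (enrRk S (x 0 + z) : ℤ) :=
              Finset.sum_range_sub (fun i => (enrRk S (x i + z) : ℤ)) k
          _ ≤ (s:ℤ) - 1 := by
              have h1 := enrRk_le S (x k + z)
              have h2 := enrRk_pos S (hxS 0 (by omega) z hz)
              rw [hs] at h1
              omega
          _ ≤ (s:ℤ) := by omega
        have hsn : B.card * (Δ + 1) ≤ s := by exact_mod_cast hsumZ
        have h4 : (4 * B.card) * (Δ + 1) < k * (Δ + 1) := by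
          calc (4 * B.card) * (Δ+1) = 4 * (B.card * (Δ+1)) := by ring
          _ ≤ 4 * s := by omega
          _ < k * (Δ + 1) := hDk
        have := lt_of_mul_lt_mul_right h4 (Nat.zero_le _)
        omega
      -- bad indices for each y
      have hbadY : ∀ y ∈ Y, ((Finset.range k).filter (fun i => ¬ gY i y)).card * 4 ≤ k := by
        intro y hy
        obtain ⟨m, hmR, hmin⟩ := Finset.exists_min_image (Finset.range n)
          (fun i => f (x i)) ⟨0, Finset.mem_range.mpr (by omega)⟩
        have hmn : m < n := Finset.mem_range.mp hmR
        have hmk : m ≤ k := by omega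
        set r : ℕ → ℤ := fun i => (enrRk T (f (x i) + y) : ℤ) with hrdef
        have hr_le : ∀ i, r i ≤ (t:ℤ) := by
          intro i
          have h0 := enrRk_le T (f (x i) + y)
          rw [ht] at h0
          show ((enrRk T (f (x i) + y)):ℤ) ≤ (t:ℤ)
          exact_mod_cast h0
        have hr_pos : ∀ i, i < n → 1 ≤ r i := by
          intro i hi
          have h0 := enrRk_pos T (hfT i hi y hy)
          show (1:ℤ) ≤ ((enrRk T (f (x i) + y)):ℤ)
          exact_mod_cast h0
        have hdec : ∀ i, i + 1 ≤ m → f (x (i+1)) ≤ f (x i) := by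
          intro i h
          rcases eq_or_lt_of_le h with he | hlt
          · have h2 := hmin i (Finset.mem_range.mpr (by omega))
            rw [← he] at h2
            exact h2
          · have hmid := enr_mid_lt_max hf (hx_lt i (i+1) (by omega) (by omega))
              (hx_lt (i+1) m hlt hmn)
            have hmi : f (x m) ≤ f (x i) := hmin i (Finset.mem_range.mpr (by omega))
            rw [max_eq_left hmi] at hmid
            exact le_of_lt hmid
        have hinc : ∀ i, m ≤ i → i + 1 < n → f (x i) ≤ f (x (i+1)) := by
          intro i him hi1
          rcases eq_or_lt_of_le him with he | hlt
          · have h2 := hmin (i+1) (Finset.mem_range.mpr hi1)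
            rw [he] at h2
            exact h2
          · have hmid := enr_mid_lt_max hf (hx_lt m i hlt (by omega))
              (hx_lt i (i+1) (by omega) hi1)
            have hmi : f (x m) ≤ f (x (i+1)) := hmin (i+1) (Finset.mem_range.mpr hi1)
            rw [max_eq_right hmi] at hmid
            exact le_of_lt hmid
        have habs_sum : ∑ i ∈ Finset.range k, |r (i+1) - r i| ≤ 2 * (t:ℤ) := by
          have hsplit : ∑ i ∈ Finset.range k, |r (i+1) - r i|
              = ∑ i ∈ Finset.range m, |r (i+1) - r i|
                + ∑ i ∈ Finset.Ico m k, |r (i+1) - r i| := by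
            rw [Finset.range_eq_Ico,
              ← Finset.sum_Ico_consecutive (fun i => |r (i+1) - r i|) (Nat.zero_le m) hmk, ← Finset.range_eq_Ico]
          have hpart1 : ∑ i ∈ Finset.range m, |r (i+1) - r i| ≤ (t:ℤ) - 1 := by
            have hcongr : ∀ i ∈ Finset.range m, |r (i+1) - r i| = r i - r (i+1) := by
              intro i hi
              have hi' : i < m := Finset.mem_range.mp hi
              have hle : r (i+1) ≤ r i := by
                show ((enrRk T (f (x (i+1)) + y)):ℤ) ≤ ((enrRk T (f (x i) + y)):ℤ)
                have h0 := enrRk_mono T (add_le_add_left (hdec i (by omega)) y)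
                exact_mod_cast h0
              rw [abs_of_nonpos (by omega)]
              omega
            rw [Finset.sum_congr rfl hcongr, Finset.sum_range_sub' (fun i => r i) m]
            have := hr_le 0
            have := hr_pos m hmn
            omega
          have hpart2 : ∑ i ∈ Finset.Ico m k, |r (i+1) - r i| ≤ (t:ℤ) - 1 := by
            have hcongr : ∀ i ∈ Finset.Ico m k, |r (i+1) - r i| = r (i+1) - r i := by
              intro i hi
              rw [Finset.mem_Ico] at hi
              have hle : r i ≤ r (i+1) := by
                show ((enrRk T (f (x i) + y)):ℤ) ≤ ((enrRk T (f (x (i+1)) + y)):ℤ)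
                have h0 := enrRk_mono T (add_le_add_left (hinc i hi.1 (by omega)) y)
                exact_mod_cast h0
              rw [abs_of_nonneg (by omega)]
            rw [Finset.sum_congr rfl hcongr, Finset.sum_Ico_eq_sub _ hmk,
              Finset.sum_range_sub (fun i => r i), Finset.sum_range_sub (fun i => r i)]
            have := hr_le k
            have := hr_pos m hmn
            omega
          omega
        set B := (Finset.range k).filter (fun i => ¬ gY i y) with hBdef
        have hterm : ∀ i ∈ B, ((Δ':ℤ)+1) ≤ |r (i+1) - r i| := by
          intro i hi
          rw [hBdef, Finset.mem_filter] at hi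
          have hgy : ¬ gY i y := hi.2
          rw [hgYdef, not_and_or] at hgy
          show ((Δ':ℤ)+1) ≤ |((enrRk T (f (x (i+1)) + y)):ℤ) - ((enrRk T (f (x i) + y)):ℤ)|
          rcases hgy with h1 | h1
          · push_neg at h1
            calc ((Δ':ℤ)+1) ≤ (enrRk T (f (x (i+1)) + y) : ℤ) - enrRk T (f (x i) + y) := by
                  omega
            _ ≤ |(enrRk T (f (x (i+1)) + y) : ℤ) - enrRk T (f (x i) + y)| := le_abs_self _
          · push_neg at h1
            calc ((Δ':ℤ)+1) ≤ (enrRk T (f (x i) + y) : ℤ) - enrRk T (f (x (i+1)) + y) := by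
                  omega
            _ ≤ |(enrRk T (f (x (i+1)) + y) : ℤ) - enrRk T (f (x i) + y)| := by
                rw [abs_sub_comm]
                exact le_abs_self _
        have hsumY : (B.card : ℤ) * ((Δ':ℤ) + 1) ≤ 2*(t:ℤ) := by
          calc (B.card:ℤ) * ((Δ':ℤ)+1) = ∑ _i ∈ B, ((Δ':ℤ)+1) := by
                rw [Finset.sum_const, nsmul_eq_mul]
          _ ≤ ∑ i ∈ B, |r (i+1) - r i| := Finset.sum_le_sum hterm
          _ ≤ ∑ i ∈ Finset.range k, |r (i+1) - r i| := by
              apply Finset.sum_le_sum_of_subset_of_nonneg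
                (by rw [hBdef]; exact Finset.filter_subset _ _)
              intro i _ _
              exact abs_nonneg _
          _ ≤ 2*(t:ℤ) := habs_sum
        have hsn : B.card * (Δ' + 1) ≤ 2*t := by exact_mod_cast hsumY
        have h4 : (4 * B.card) * (Δ' + 1) < k * (Δ' + 1) := by
          calc (4 * B.card) * (Δ'+1) = 4 * (B.card * (Δ'+1)) := by ring
          _ ≤ 4 * (2*t) := by omega
          _ = 8 * t := by ring
          _ < k * (Δ' + 1) := hD'k
        have := lt_of_mul_lt_mul_right h4 (Nat.zero_le _)
        omega
      -- lower bound for G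
      have hGlow : (k:ℝ) * (Y.card:ℝ) * (Z.card:ℝ) / 2 ≤ (G.card:ℝ) := by
        have hGcard : G.card = ∑ i ∈ Finset.range k,
            (Z.filter (gZ i)).card * (Y.filter (gY i)).card := by
          rw [hGdef, Finset.card_sigma]
          exact Finset.sum_congr rfl (fun i _ => Finset.card_product _ _)
        have hswapZ : ∑ i ∈ Finset.range k, ((Z.filter (fun z => ¬ gZ i z)).card:ℝ)
            = ∑ z ∈ Z, (((Finset.range k).filter (fun i => ¬ gZ i z)).card:ℝ) := by
          simp_rw [Finset.card_filter]
          push_cast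
          rw [Finset.sum_comm]
        have hswapY : ∑ i ∈ Finset.range k, ((Y.filter (fun y => ¬ gY i y)).card:ℝ)
            = ∑ y ∈ Y, (((Finset.range k).filter (fun i => ¬ gY i y)).card:ℝ) := by
          simp_rw [Finset.card_filter]
          push_cast
          rw [Finset.sum_comm]
        have hbZsum : ∑ i ∈ Finset.range k, ((Z.filter (fun z => ¬ gZ i z)).card:ℝ)
            ≤ (Z.card:ℝ) * (k:ℝ) / 4 := by
          rw [hswapZ]
          calc ∑ z ∈ Z, (((Finset.range k).filter (fun i => ¬ gZ i z)).card:ℝ)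
              ≤ ∑ _z ∈ Z, (k:ℝ)/4 := by
                apply Finset.sum_le_sum
                intro z hz
                have h0 := hbadZ z hz
                have h0' : ((((Finset.range k).filter (fun i => ¬ gZ i z)).card * 4 : ℕ):ℝ)
                    ≤ (k:ℝ) := by exact_mod_cast h0
                push_cast at h0'
                linarith
          _ = (Z.card:ℝ) * (k:ℝ) / 4 := by
                rw [Finset.sum_const, nsmul_eq_mul]
                ring
        have hbYsum : ∑ i ∈ Finset.range k, ((Y.filter (fun y => ¬ gY i y)).card:ℝ)
            ≤ (Y.card:ℝ) * (k:ℝ) / 4 := by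
          rw [hswapY]
          calc ∑ y ∈ Y, (((Finset.range k).filter (fun i => ¬ gY i y)).card:ℝ)
              ≤ ∑ _y ∈ Y, (k:ℝ)/4 := by
                apply Finset.sum_le_sum
                intro y hy
                have h0 := hbadY y hy
                have h0' : ((((Finset.range k).filter (fun i => ¬ gY i y)).card * 4 : ℕ):ℝ)
                    ≤ (k:ℝ) := by exact_mod_cast h0
                push_cast at h0'
                linarith
          _ = (Y.card:ℝ) * (k:ℝ) / 4 := by
                rw [Finset.sum_const, nsmul_eq_mul]
                ring
        have hterm : ∀ i ∈ Finset.range k,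
            (Z.card:ℝ)*(Y.card:ℝ) - (Y.card:ℝ) * ((Z.filter (fun z => ¬ gZ i z)).card:ℝ)
              - (Z.card:ℝ) * ((Y.filter (fun y => ¬ gY i y)).card:ℝ)
            ≤ ((Z.filter (gZ i)).card:ℝ) * ((Y.filter (gY i)).card:ℝ) := by
          intro i _
          have h1 : (Z.filter (gZ i)).card + (Z.filter (fun z => ¬ gZ i z)).card = Z.card :=
            Finset.card_filter_add_card_filter_not _
          have h2 : (Y.filter (gY i)).card + (Y.filter (fun y => ¬ gY i y)).card = Y.card :=
            Finset.card_filter_add_card_filter_not _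
          have h1' : ((Z.filter (gZ i)).card:ℝ) + ((Z.filter (fun z => ¬ gZ i z)).card:ℝ)
              = (Z.card:ℝ) := by exact_mod_cast h1
          have h2' : ((Y.filter (gY i)).card:ℝ) + ((Y.filter (fun y => ¬ gY i y)).card:ℝ)
              = (Y.card:ℝ) := by exact_mod_cast h2
          have c1 : (0:ℝ) ≤ ((Z.filter (gZ i)).card:ℝ) := Nat.cast_nonneg _
          have c2 : (0:ℝ) ≤ ((Y.filter (gY i)).card:ℝ) := Nat.cast_nonneg _
          nlinarith [c1, c2, h1', h2']
        have hGreal : (G.card:ℝ) = ∑ i ∈ Finset.range k,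
            ((Z.filter (gZ i)).card:ℝ) * ((Y.filter (gY i)).card:ℝ) := by
          rw [hGcard]
          push_cast
          rfl
        rw [hGreal]
        have hsum_lb := Finset.sum_le_sum hterm
        have hexpand : ∑ i ∈ Finset.range k,
            ((Z.card:ℝ)*(Y.card:ℝ) - (Y.card:ℝ) * ((Z.filter (fun z => ¬ gZ i z)).card:ℝ)
              - (Z.card:ℝ) * ((Y.filter (fun y => ¬ gY i y)).card:ℝ))
            = (k:ℝ) * ((Z.card:ℝ)*(Y.card:ℝ))
              - (Y.card:ℝ) * (∑ i ∈ Finset.range k, ((Z.filter (fun z => ¬ gZ i z)).card:ℝ))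
              - (Z.card:ℝ) * (∑ i ∈ Finset.range k, ((Y.filter (fun y => ¬ gY i y)).card:ℝ)) := by
          rw [Finset.sum_sub_distrib, Finset.sum_sub_distrib, Finset.sum_const,
            Finset.card_range, nsmul_eq_mul, ← Finset.mul_sum, ← Finset.mul_sum]
        have hyr : (0:ℝ) ≤ (Y.card:ℝ) := Nat.cast_nonneg _
        have hzr : (0:ℝ) ≤ (Z.card:ℝ) := Nat.cast_nonneg _
        have hfin : (k:ℝ) * (Y.card:ℝ) * (Z.card:ℝ) / 2 ≤ ∑ i ∈ Finset.range k,
            ((Z.card:ℝ)*(Y.card:ℝ) - (Y.card:ℝ) * ((Z.filter (fun z => ¬ gZ i z)).card:ℝ)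
              - (Z.card:ℝ) * ((Y.filter (fun y => ¬ gY i y)).card:ℝ)) := by
          rw [hexpand]
          have b1 : (Y.card:ℝ) * (∑ i ∈ Finset.range k, ((Z.filter (fun z => ¬ gZ i z)).card:ℝ))
              ≤ (Y.card:ℝ) * ((Z.card:ℝ) * (k:ℝ) / 4) :=
            mul_le_mul_of_nonneg_left hbZsum hyr
          have b2 : (Z.card:ℝ) * (∑ i ∈ Finset.range k, ((Y.filter (fun y => ¬ gY i y)).card:ℝ))
              ≤ (Z.card:ℝ) * ((Y.card:ℝ) * (k:ℝ) / 4) :=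
            mul_le_mul_of_nonneg_left hbYsum hzr
          linarith
        linarith
      -- final arithmetic
      have hkr : (0:ℝ) < (k:ℝ) := by exact_mod_cast hk1
      have hsr : (0:ℝ) ≤ (s:ℝ) := Nat.cast_nonneg s
      have htr : (0:ℝ) ≤ (t:ℝ) := Nat.cast_nonneg t
      have hΔr : (Δ:ℝ) * (k:ℝ) ≤ 4*(s:ℝ) := by
        have h0 : Δ * k ≤ 4*s := Nat.div_mul_le_self (4*s) k
        exact_mod_cast h0
      have hΔ'r : (Δ':ℝ) * (k:ℝ) ≤ 8*(t:ℝ) := by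
        have h0 : Δ' * k ≤ 8*t := Nat.div_mul_le_self (8*t) k
        exact_mod_cast h0
      have hktr : (k:ℝ) ≤ 2*(t:ℝ) := by
        have h0 : k ≤ 2*t := by omega
        exact_mod_cast h0
      have hGupR : (G.card:ℝ) * (k:ℝ)^2 ≤ 72 * ((s:ℝ)*(t:ℝ))^2 := by
        have h1 : (G.card:ℝ) ≤ ((s:ℝ)*(Δ:ℝ)) * ((t:ℝ)*(2*(Δ':ℝ)+1)) := by
          exact_mod_cast hGup
        have hd0 : (0:ℝ) ≤ (Δ:ℝ)*(k:ℝ) := by positivity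
        have hd1 : (0:ℝ) ≤ 2*((Δ':ℝ)*(k:ℝ))+(k:ℝ) := by positivity
        have h18 : 2*((Δ':ℝ)*(k:ℝ))+(k:ℝ) ≤ 18*(t:ℝ) := by linarith
        calc (G.card:ℝ) * (k:ℝ)^2
            ≤ (((s:ℝ)*(Δ:ℝ)) * ((t:ℝ)*(2*(Δ':ℝ)+1))) * (k:ℝ)^2 :=
              mul_le_mul_of_nonneg_right h1 (sq_nonneg _)
          _ = ((s:ℝ)*(t:ℝ)) * (((Δ:ℝ)*(k:ℝ)) * (2*((Δ':ℝ)*(k:ℝ))+(k:ℝ))) := by ring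
          _ ≤ ((s:ℝ)*(t:ℝ)) * ((4*(s:ℝ)) * (18*(t:ℝ))) := by
              apply mul_le_mul_of_nonneg_left _ (by positivity)
              exact mul_le_mul hΔr h18 hd1 (by positivity)
          _ = 72 * ((s:ℝ)*(t:ℝ))^2 := by ring
      have hstep := mul_le_mul_of_nonneg_right hGlow (sq_nonneg (k:ℝ))
      have hcomb : (k:ℝ)^3 * (Y.card:ℝ) * (Z.card:ℝ) ≤ 144 * ((s:ℝ)*(t:ℝ))^2 := by
        nlinarith [hstep, hGupR]
      have hnk : (n:ℝ) ≤ 2*(k:ℝ) := by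
        have h0 : n ≤ 2*k := by omega
        exact_mod_cast h0
      have hn0 : (0:ℝ) ≤ (n:ℝ) := Nat.cast_nonneg n
      have hn3 : (n:ℝ)^3 ≤ 8*(k:ℝ)^3 := by
        have h0 : (n:ℝ)^3 ≤ (2*(k:ℝ))^3 := pow_le_pow_left₀ hn0 hnk 3
        nlinarith [h0]
      have hyr : (0:ℝ) ≤ (Y.card:ℝ) := Nat.cast_nonneg _
      have hzr : (0:ℝ) ≤ (Z.card:ℝ) := Nat.cast_nonneg _
      have hstep2 : (n:ℝ)^3 * (Y.card:ℝ) * (Z.card:ℝ)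
          ≤ 8*(k:ℝ)^3 * (Y.card:ℝ) * (Z.card:ℝ) := by
        apply mul_le_mul_of_nonneg_right _ hzr
        apply mul_le_mul_of_nonneg_right hn3 hyr
      have hstep3 : 8*((k:ℝ)^3 * (Y.card:ℝ) * (Z.card:ℝ)) ≤ 8*(144 * ((s:ℝ)*(t:ℝ))^2) := by
        linarith
      calc (n:ℝ)^3 * (Y.card:ℝ) * (Z.card:ℝ)
          ≤ 8*(k:ℝ)^3 * (Y.card:ℝ) * (Z.card:ℝ) := hstep2
        _ = 8*((k:ℝ)^3 * (Y.card:ℝ) * (Z.card:ℝ)) := by ring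
        _ ≤ 8*(144 * ((s:ℝ)*(t:ℝ))^2) := hstep3
        _ = 1152 * ((t:ℝ) * (s:ℝ))^2 := by ring

  -- conclude from key
  rw [hn, ht, hs]
  have h0n : (0:ℝ) ≤ (n:ℝ) := Nat.cast_nonneg n
  have h0y : (0:ℝ) ≤ (Y.card:ℝ) := Nat.cast_nonneg _
  have h0z : (0:ℝ) ≤ (Z.card:ℝ) := Nat.cast_nonneg _
  have hL0 : (0:ℝ) ≤ (1/100 : ℝ) * (n:ℝ) ^ ((3:ℝ)/2) * (Y.card:ℝ) ^ ((1:ℝ)/2) *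
      (Z.card:ℝ) ^ ((1:ℝ)/2) := by positivity
  have hts0 : (0:ℝ) ≤ (t:ℝ) * (s:ℝ) := by positivity
  have hA : ((n:ℝ) ^ ((3:ℝ)/2))^2 = (n:ℝ)^3 := by
    rw [← Real.rpow_natCast ((n:ℝ) ^ ((3:ℝ)/2)) 2, ← Real.rpow_mul h0n]
    norm_num
  have hB : ((Y.card:ℝ) ^ ((1:ℝ)/2))^2 = (Y.card:ℝ) := by
    rw [← Real.rpow_natCast ((Y.card:ℝ) ^ ((1:ℝ)/2)) 2, ← Real.rpow_mul h0y]
    norm_num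
  have hC : ((Z.card:ℝ) ^ ((1:ℝ)/2))^2 = (Z.card:ℝ) := by
    rw [← Real.rpow_natCast ((Z.card:ℝ) ^ ((1:ℝ)/2)) 2, ← Real.rpow_mul h0z]
    norm_num
  have hsq : ((1/100 : ℝ) * (n:ℝ) ^ ((3:ℝ)/2) * (Y.card:ℝ) ^ ((1:ℝ)/2) *
      (Z.card:ℝ) ^ ((1:ℝ)/2))^2 ≤ ((t:ℝ) * (s:ℝ))^2 := by
    have expand : ((1/100 : ℝ) * (n:ℝ) ^ ((3:ℝ)/2) * (Y.card:ℝ) ^ ((1:ℝ)/2) *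
        (Z.card:ℝ) ^ ((1:ℝ)/2))^2
        = (1/10000) * (((n:ℝ) ^ ((3:ℝ)/2))^2 * (((Y.card:ℝ) ^ ((1:ℝ)/2))^2 *
          ((Z.card:ℝ) ^ ((1:ℝ)/2))^2)) := by ring
    rw [expand, hA, hB, hC]
    nlinarith [key]
  calc (1/100 : ℝ) * (n:ℝ) ^ ((3:ℝ)/2) * (Y.card:ℝ) ^ ((1:ℝ)/2) * (Z.card:ℝ) ^ ((1:ℝ)/2)
      = Real.sqrt (((1/100 : ℝ) * (n:ℝ) ^ ((3:ℝ)/2) * (Y.card:ℝ) ^ ((1:ℝ)/2) *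
        (Z.card:ℝ) ^ ((1:ℝ)/2))^2) := (Real.sqrt_sq hL0).symm
    _ ≤ Real.sqrt (((t:ℝ) * (s:ℝ))^2) := Real.sqrt_le_sqrt hsq
    _ = (t:ℝ) * (s:ℝ) := Real.sqrt_sq hts0

end main
lemma enr_neg_image2_card (f : ℝ → ℝ) (X Y : Finset ℝ) :
    (Finset.image₂ (· + ·) (X.image (fun u => -(f u))) (Y.image (fun v => -v))).card
      = (Finset.image₂ (· + ·) (X.image f) Y).card := by
  apply Finset.card_bij (fun w _ => -w)
  · intro w hw
    obtain ⟨a, ha, b, hb, hab⟩ := Finset.mem_image₂.mp hw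
    obtain ⟨u, hu, rfl⟩ := Finset.mem_image.mp ha
    obtain ⟨v, hv, rfl⟩ := Finset.mem_image.mp hb
    exact Finset.mem_image₂.mpr ⟨f u, Finset.mem_image_of_mem f hu, v, hv,
      by rw [← hab]; ring⟩
  · intro w1 _ w2 _ he
    exact neg_inj.mp he
  · intro w hw
    obtain ⟨a, ha, b, hb, hab⟩ := Finset.mem_image₂.mp hw
    obtain ⟨u, hu, rfl⟩ := Finset.mem_image.mp ha
    refine ⟨-w, Finset.mem_image₂.mpr ⟨-(f u), Finset.mem_image_of_mem _ hu, -b,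
      Finset.mem_image_of_mem _ hb, by rw [← hab]; ring⟩, by ring⟩

theorem elekes_nathanson_ruzsa :
    ∃ c : ℝ, 0 < c ∧ ∀ f : ℝ → ℝ,
      (StrictConvexOn ℝ Set.univ f ∨ StrictConcaveOn ℝ Set.univ f) →
      ∀ X Y Z : Finset ℝ, X.Nonempty → Y.Nonempty → Z.Nonempty →
        c * (X.card : ℝ) ^ ((3 : ℝ) / 2) * (Y.card : ℝ) ^ ((1 : ℝ) / 2) *
            (Z.card : ℝ) ^ ((1 : ℝ) / 2) ≤
          ((Finset.image₂ (· + ·) (X.image f) Y).card : ℝ) *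
            ((Finset.image₂ (· + ·) X Z).card : ℝ) := by
  refine ⟨1/100, by norm_num, ?_⟩
  intro f hf X Y Z hX hY hZ
  rcases hf with hconv | hconc
  · exact enr_convex f hconv X Y Z hX hY hZ
  · have hg : StrictConvexOn ℝ Set.univ (fun u => -(f u)) := hconc.neg
    have hY' : (Y.image (fun v => -v)).Nonempty := hY.image _
    have h := enr_convex _ hg X (Y.image (fun v => -v)) Z hX hY' hZ
    rw [Finset.card_image_of_injective _ neg_injective, enr_neg_image2_card f X Y] at h
    exact h
end

section
/- Let ℓ and ℓ' be two distinct lines through the origin in ℝ² with positive slopes λ < λ', and let P ⊂ ℓ and Q ⊂ ℓ' be finite sets of points lying in the open positive quadrant. Then |P + Q| = |P|·|Q|, and every point of P + Q has slope strictly between λ and λ' (i.e., lies strictly between the two lines). -/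
open Finset

theorem solymosi_observation (lam lam' : ℝ) (hlam : 0 < lam) (hlt : lam < lam')
    (P Q : Finset (ℝ × ℝ))
    (hP : ∀ p ∈ P, 0 < p.1 ∧ p.2 = lam * p.1)
    (hQ : ∀ q ∈ Q, 0 < q.1 ∧ q.2 = lam' * q.1) :
    (Finset.image₂ (· + ·) P Q).card = P.card * Q.card ∧
      ∀ z ∈ Finset.image₂ (· + ·) P Q, lam < z.2 / z.1 ∧ z.2 / z.1 < lam' := by
  constructor
  · rw [Finset.card_image₂_iff]
    rintro ⟨p, q⟩ hpq ⟨p', q'⟩ hpq' h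
    simp only [Finset.coe_product, Set.mem_prod] at hpq hpq'
    obtain ⟨hp1, hp2⟩ := hP p hpq.1
    obtain ⟨hq1, hq2⟩ := hQ q hpq.2
    obtain ⟨hp1', hp2'⟩ := hP p' hpq'.1
    obtain ⟨hq1', hq2'⟩ := hQ q' hpq'.2
    simp only [Prod.ext_iff, Prod.fst_add, Prod.snd_add] at h
    obtain ⟨h1, h2⟩ := h
    rw [hp2, hq2, hp2', hq2'] at h2
    have hx : p.1 = p'.1 := by nlinarith
    have hy : q.1 = q'.1 := by linarith
    have : p = p' := Prod.ext hx (by rw [hp2, hp2', hx])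
    have : q = q' := Prod.ext hy (by rw [hq2, hq2', hy])
    simp_all
  · intro z hz
    rw [Finset.mem_image₂] at hz
    obtain ⟨p, hp, q, hq, rfl⟩ := hz
    obtain ⟨hp1, hp2⟩ := hP p hp
    obtain ⟨hq1, hq2⟩ := hQ q hq
    have hpos : 0 < (p + q).1 := by simp [Prod.fst_add]; linarith
    constructor
    · rw [lt_div_iff₀ hpos]
      simp only [Prod.fst_add, Prod.snd_add]
      nlinarith
    · rw [div_lt_iff₀ hpos]
      simp only [Prod.fst_add, Prod.snd_add]
      nlinarith
end

section
/- Let A be a finite set of positive reals with |A| ≥ 2 and suppose |A/A| ≥ |A|^{4/3 + 2/39}. Then |A/A + A| ≫ |A|^{3/2 + 1/26}. -/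
open Finset

namespace ENRAux

noncomputable def nxt (X : Finset ℝ) (x : ℝ) : ℝ :=
  if h : (X.filter (fun y => x < y)).Nonempty then (X.filter (fun y => x < y)).min' h else 0

lemma nxt_spec {X : Finset ℝ} {x z : ℝ} (hz : z ∈ X) (hxz : x < z) :
    nxt X x ∈ X ∧ x < nxt X x ∧ ∀ y ∈ X, x < y → nxt X x ≤ y := by
  have hne : (X.filter (fun y => x < y)).Nonempty := ⟨z, Finset.mem_filter.mpr ⟨hz, hxz⟩⟩
  unfold nxt
  rw [dif_pos hne]
  have h1 := Finset.min'_mem (X.filter (fun y => x < y)) hne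
  rw [Finset.mem_filter] at h1
  exact ⟨h1.1, h1.2, fun y hy hxy => Finset.min'_le _ _ (Finset.mem_filter.mpr ⟨hy, hxy⟩)⟩

noncomputable def gcnt (S X : Finset ℝ) (x a : ℝ) : ℕ :=
  (S.filter (fun s => x + a < s ∧ s ≤ nxt X x + a)).card

noncomputable def hcnt (S X : Finset ℝ) (x a : ℝ) : ℕ :=
  (S.filter (fun s => (nxt X x)⁻¹ + a ≤ s ∧ s < x⁻¹ + a)).card

lemma rank_eq {S : Finset ℝ} {u w₁ w₂ : ℝ} (h₁ : w₁ ∈ S) (h₂ : w₂ ∈ S)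
    (hu₁ : u < w₁) (hu₂ : u < w₂)
    (hc : (S.filter fun s => u < s ∧ s ≤ w₁).card = (S.filter fun s => u < s ∧ s ≤ w₂).card) :
    w₁ = w₂ := by
  rcases lt_trichotomy w₁ w₂ with h | h | h
  · exfalso
    have hsub : (S.filter fun s => u < s ∧ s ≤ w₁) ⊆ (S.filter fun s => u < s ∧ s ≤ w₂) := by
      intro s hs
      rw [Finset.mem_filter] at hs ⊢
      exact ⟨hs.1, hs.2.1, hs.2.2.trans h.le⟩
    have hmem : w₂ ∈ (S.filter fun s => u < s ∧ s ≤ w₂) := by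
      rw [Finset.mem_filter]; exact ⟨h₂, hu₂, le_refl _⟩
    have hnmem : w₂ ∉ (S.filter fun s => u < s ∧ s ≤ w₁) := by
      rw [Finset.mem_filter]; intro hcon; linarith [hcon.2.2]
    have := Finset.card_lt_card ((Finset.ssubset_iff_of_subset hsub).mpr ⟨w₂, hmem, hnmem⟩)
    omega
  · exact h
  · exfalso
    have hsub : (S.filter fun s => u < s ∧ s ≤ w₂) ⊆ (S.filter fun s => u < s ∧ s ≤ w₁) := by
      intro s hs
      rw [Finset.mem_filter] at hs ⊢
      exact ⟨hs.1, hs.2.1, hs.2.2.trans h.le⟩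
    have hmem : w₁ ∈ (S.filter fun s => u < s ∧ s ≤ w₁) := by
      rw [Finset.mem_filter]; exact ⟨h₁, hu₁, le_refl _⟩
    have hnmem : w₁ ∉ (S.filter fun s => u < s ∧ s ≤ w₂) := by
      rw [Finset.mem_filter]; intro hcon; linarith [hcon.2.2]
    have := Finset.card_lt_card ((Finset.ssubset_iff_of_subset hsub).mpr ⟨w₁, hmem, hnmem⟩)
    omega

lemma rank_eq' {S : Finset ℝ} {v w₁ w₂ : ℝ} (h₁ : w₁ ∈ S) (h₂ : w₂ ∈ S)
    (hu₁ : w₁ < v) (hu₂ : w₂ < v)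
    (hc : (S.filter fun s => w₁ ≤ s ∧ s < v).card = (S.filter fun s => w₂ ≤ s ∧ s < v).card) :
    w₁ = w₂ := by
  rcases lt_trichotomy w₁ w₂ with h | h | h
  · exfalso
    have hsub : (S.filter fun s => w₂ ≤ s ∧ s < v) ⊆ (S.filter fun s => w₁ ≤ s ∧ s < v) := by
      intro s hs
      rw [Finset.mem_filter] at hs ⊢
      exact ⟨hs.1, h.le.trans hs.2.1, hs.2.2⟩
    have hmem : w₁ ∈ (S.filter fun s => w₁ ≤ s ∧ s < v) := by
      rw [Finset.mem_filter]; exact ⟨h₁, le_refl _, hu₁⟩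
    have hnmem : w₁ ∉ (S.filter fun s => w₂ ≤ s ∧ s < v) := by
      rw [Finset.mem_filter]; intro hcon; linarith [hcon.2.1]
    have := Finset.card_lt_card ((Finset.ssubset_iff_of_subset hsub).mpr ⟨w₁, hmem, hnmem⟩)
    omega
  · exact h
  · exfalso
    have hsub : (S.filter fun s => w₁ ≤ s ∧ s < v) ⊆ (S.filter fun s => w₂ ≤ s ∧ s < v) := by
      intro s hs
      rw [Finset.mem_filter] at hs ⊢
      exact ⟨hs.1, h.le.trans hs.2.1, hs.2.2⟩
    have hmem : w₂ ∈ (S.filter fun s => w₂ ≤ s ∧ s < v) := by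
      rw [Finset.mem_filter]; exact ⟨h₂, le_refl _, hu₂⟩
    have hnmem : w₂ ∉ (S.filter fun s => w₁ ≤ s ∧ s < v) := by
      rw [Finset.mem_filter]; intro hcon; linarith [hcon.2.1]
    have := Finset.card_lt_card ((Finset.ssubset_iff_of_subset hsub).mpr ⟨w₂, hmem, hnmem⟩)
    omega

lemma pair_eq {x y d : ℝ} (hx : 0 < x) (hy : 0 < y) (hd : 0 < d)
    (h : x⁻¹ - (x + d)⁻¹ = y⁻¹ - (y + d)⁻¹) : x = y := by
  have hx' : x ≠ 0 := ne_of_gt hx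
  have hy' : y ≠ 0 := ne_of_gt hy
  have hxd : x + d ≠ 0 := by positivity
  have hyd : y + d ≠ 0 := by positivity
  have h1 : x⁻¹ - (x + d)⁻¹ = d / (x * (x + d)) := by
    rw [inv_sub_inv hx' hxd]
    congr 1
    ring
  have h2 : y⁻¹ - (y + d)⁻¹ = d / (y * (y + d)) := by
    rw [inv_sub_inv hy' hyd]
    congr 1
    ring
  rw [h1, h2] at h
  have hxp : x * (x + d) ≠ 0 := by positivity
  have hyp : y * (y + d) ≠ 0 := by positivity
  have h3 : d * (y * (y + d)) = d * (x * (x + d)) := by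
    have := (div_eq_div_iff hxp hyp).mp h
    linarith
  have h4 : x * (x + d) = y * (y + d) := mul_left_cancel₀ (ne_of_gt hd) h3.symm
  have h5 : (x - y) * (x + y + d) = 0 := by linear_combination h4
  rcases mul_eq_zero.mp h5 with h6 | h6
  · linarith
  · linarith

lemma key_inj {S X : Finset ℝ} {x y a b a' b' : ℝ}
    (hx0 : 0 < x) (hy0 : 0 < y) (hxnx : x < nxt X x) (hyny : y < nxt X y)
    (hnxS : nxt X x + a ∈ S) (hnyS : nxt X y + b ∈ S)
    (hnxS' : (nxt X x)⁻¹ + a' ∈ S) (hnyS' : (nxt X y)⁻¹ + b' ∈ S)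
    (h1 : x + a = y + b) (h2 : x⁻¹ + a' = y⁻¹ + b')
    (h3 : gcnt S X x a = gcnt S X y b) (h4 : hcnt S X x a' = hcnt S X y b') :
    x = y := by
  unfold gcnt at h3
  unfold hcnt at h4
  simp only [← h1] at h3
  simp only [← h2] at h4
  have e1 : nxt X x + a = nxt X y + b :=
    rank_eq hnxS hnyS (by linarith) (by rw [h1]; linarith) h3
  have hxinv : (nxt X x)⁻¹ < x⁻¹ := inv_strictAnti₀ hx0 hxnx
  have hyinv : (nxt X y)⁻¹ < y⁻¹ := inv_strictAnti₀ hy0 hyny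
  have e2 : (nxt X x)⁻¹ + a' = (nxt X y)⁻¹ + b' :=
    rank_eq' hnxS' hnyS' (by linarith) (by rw [h2]; linarith) h4
  have hd : nxt X x - x = nxt X y - y := by linarith
  have hrho : x⁻¹ - (nxt X x)⁻¹ = y⁻¹ - (nxt X y)⁻¹ := by linarith
  have hx' : x + (nxt X x - x) = nxt X x := by ring
  have hy' : y + (nxt X x - x) = nxt X y := by linarith
  exact pair_eq (d := nxt X x - x) hx0 hy0 (by linarith) (by rw [hx', hy']; linarith)

set_option maxHeartbeats 2000000 in
lemma enr_core (X A : Finset ℝ) (hX0 : ∀ x ∈ X, 0 < x) (hXinv : ∀ x ∈ X, x⁻¹ ∈ X)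
    (hA : A.Nonempty) (hX2 : 2 ≤ X.card) :
    X.card ^ 3 * A.card ^ 2 ≤ 512 * (Finset.image₂ (· + ·) X A).card ^ 4 := by
  classical
  set S := Finset.image₂ (· + ·) X A with hSdef
  set p := S.card with hp
  set n := A.card with hn
  have hn0 : 0 < n := Finset.card_pos.mpr hA
  have hXne : X.Nonempty := Finset.card_pos.mp (by omega)
  set m := X.max' hXne with hm
  have hmX : m ∈ X := X.max'_mem hXne
  set X' := X.erase m with hX'
  have hcard' : X'.card = X.card - 1 := Finset.card_erase_of_mem hmX
  set M := X'.card with hM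
  have hM1 : 1 ≤ M := by omega
  have hNM : X.card = M + 1 := by omega
  have hX'X : ∀ x ∈ X', x ∈ X := fun x hx => Finset.mem_of_mem_erase hx
  have hxltm : ∀ x ∈ X', x < m := by
    intro x hx
    rcases Finset.mem_erase.mp hx with ⟨hne, hxX⟩
    exact lt_of_le_of_ne (X.le_max' x hxX) hne
  have hnxt : ∀ x ∈ X', nxt X x ∈ X ∧ x < nxt X x ∧ ∀ y ∈ X, x < y → nxt X x ≤ y :=
    fun x hx => nxt_spec hmX (hxltm x hx)
  have hmemS : ∀ x ∈ X, ∀ a ∈ A, x + a ∈ S := fun x hx a ha =>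
    Finset.mem_image₂_of_mem hx ha
  -- K : the gap threshold
  set K := 4 * p / M with hK
  have hdivK : 4 * p < (K + 1) * M := by
    have h1 : M * K + (4 * p) % M = 4 * p := Nat.div_add_mod (4 * p) M
    have h2 : (4 * p) % M < M := Nat.mod_lt _ hM1
    calc 4 * p = M * K + (4 * p) % M := h1.symm
    _ < M * K + M := by omega
    _ = (K + 1) * M := by ring
  have hKM : K * M ≤ 4 * p := Nat.div_mul_le_self (4 * p) M
  -- sum bounds
  have hgsum : ∀ a ∈ A, ∑ x ∈ X', gcnt S X x a ≤ p := by
    intro a _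
    have hdisj : ∀ x ∈ X', ∀ y ∈ X', x ≠ y →
        Disjoint (S.filter (fun s => x + a < s ∧ s ≤ nxt X x + a))
                 (S.filter (fun s => y + a < s ∧ s ≤ nxt X y + a)) := by
      intro x hx y hy hne
      rw [Finset.disjoint_left]
      intro s hs hs'
      rw [Finset.mem_filter] at hs hs'
      rcases lt_trichotomy x y with hlt | heq | hlt
      · have := (hnxt x hx).2.2 y (hX'X y hy) hlt
        linarith [hs.2.2, hs'.2.1]
      · exact hne heq
      · have := (hnxt y hy).2.2 x (hX'X x hx) hlt
        linarith [hs'.2.2, hs.2.1]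
    calc ∑ x ∈ X', gcnt S X x a
        = (X'.biUnion (fun x => S.filter (fun s => x + a < s ∧ s ≤ nxt X x + a))).card :=
          (Finset.card_biUnion hdisj).symm
      _ ≤ p := Finset.card_le_card (Finset.biUnion_subset.mpr
          (fun x _ => Finset.filter_subset _ _))
  have hhsum : ∀ a ∈ A, ∑ x ∈ X', hcnt S X x a ≤ p := by
    intro a _
    have hdisj : ∀ x ∈ X', ∀ y ∈ X', x ≠ y →
        Disjoint (S.filter (fun s => (nxt X x)⁻¹ + a ≤ s ∧ s < x⁻¹ + a))
                 (S.filter (fun s => (nxt X y)⁻¹ + a ≤ s ∧ s < y⁻¹ + a)) := by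
      intro x hx y hy hne
      rw [Finset.disjoint_left]
      intro s hs hs'
      rw [Finset.mem_filter] at hs hs'
      rcases lt_trichotomy x y with hlt | heq | hlt
      · have h1 : nxt X x ≤ y := (hnxt x hx).2.2 y (hX'X y hy) hlt
        have h2 : y⁻¹ ≤ (nxt X x)⁻¹ :=
          inv_anti₀ (hX0 _ (hnxt x hx).1) h1
        linarith [hs.2.1, hs'.2.2]
      · exact hne heq
      · have h1 : nxt X y ≤ x := (hnxt y hy).2.2 x (hX'X x hx) hlt
        have h2 : x⁻¹ ≤ (nxt X y)⁻¹ :=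
          inv_anti₀ (hX0 _ (hnxt y hy).1) h1
        linarith [hs'.2.1, hs.2.2]
    calc ∑ x ∈ X', hcnt S X x a
        = (X'.biUnion (fun x => S.filter (fun s => (nxt X x)⁻¹ + a ≤ s ∧ s < x⁻¹ + a))).card :=
          (Finset.card_biUnion hdisj).symm
      _ ≤ p := Finset.card_le_card (Finset.biUnion_subset.mpr
          (fun x _ => Finset.filter_subset _ _))
  -- each gap contains at least one element
  have hg1 : ∀ x ∈ X', ∀ a ∈ A, 1 ≤ gcnt S X x a := by
    intro x hx a ha
    have hmem : nxt X x + a ∈ S.filter (fun s => x + a < s ∧ s ≤ nxt X x + a) := by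
      rw [Finset.mem_filter]
      exact ⟨hmemS _ (hnxt x hx).1 a ha, by linarith [(hnxt x hx).2.1], le_refl _⟩
    have := Finset.card_pos.mpr ⟨_, hmem⟩
    unfold gcnt
    omega
  have hh1 : ∀ x ∈ X', ∀ a ∈ A, 1 ≤ hcnt S X x a := by
    intro x hx a ha
    have hinv : (nxt X x)⁻¹ < x⁻¹ := inv_strictAnti₀ (hX0 x (hX'X x hx)) (hnxt x hx).2.1
    have hmem : (nxt X x)⁻¹ + a ∈ S.filter (fun s => (nxt X x)⁻¹ + a ≤ s ∧ s < x⁻¹ + a) := by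
      rw [Finset.mem_filter]
      exact ⟨hmemS _ (hXinv _ (hnxt x hx).1) a ha, le_refl _, by linarith⟩
    have := Finset.card_pos.mpr ⟨_, hmem⟩
    unfold hcnt
    omega
  -- Markov bound for the number of bad pairs
  have hmarkov : ∀ f : ℝ → ℝ → ℕ, (∀ a ∈ A, ∑ x ∈ X', f x a ≤ p) →
      4 * (∑ x ∈ X', (A.filter (fun a => K < f x a)).card) < M * n := by
    intro f hf
    set b1 := ∑ x ∈ X', (A.filter (fun a => K < f x a)).card with hb1
    have hstep : ∀ x ∈ X', (K + 1) * (A.filter (fun a => K < f x a)).card ≤ ∑ a ∈ A, f x a := by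
      intro x hx
      calc (K + 1) * (A.filter (fun a => K < f x a)).card
          = ∑ _a ∈ A.filter (fun a => K < f x a), (K + 1) := by
            rw [Finset.sum_const, smul_eq_mul, mul_comm]
        _ ≤ ∑ a ∈ A.filter (fun a => K < f x a), f x a :=
            Finset.sum_le_sum (fun a ha => by
              have := (Finset.mem_filter.mp ha).2
              omega)
        _ ≤ ∑ a ∈ A, f x a := Finset.sum_le_sum_of_subset (Finset.filter_subset _ _)
    have htot : (K + 1) * b1 ≤ n * p := by
      calc (K + 1) * b1 = ∑ x ∈ X', (K + 1) * (A.filter (fun a => K < f x a)).card := by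
            rw [hb1, Finset.mul_sum]
        _ ≤ ∑ x ∈ X', ∑ a ∈ A, f x a := Finset.sum_le_sum hstep
        _ = ∑ a ∈ A, ∑ x ∈ X', f x a := Finset.sum_comm
        _ ≤ ∑ _a ∈ A, p := Finset.sum_le_sum hf
        _ = n * p := by rw [Finset.sum_const, smul_eq_mul]
    have hlt : (K + 1) * (4 * b1) < (K + 1) * (M * n) := by
      calc (K + 1) * (4 * b1) = 4 * ((K + 1) * b1) := by ring
        _ ≤ 4 * (n * p) := by omega
        _ = n * (4 * p) := by ring
        _ < n * ((K + 1) * M) := mul_lt_mul_of_pos_left hdivK hn0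
        _ = (K + 1) * (M * n) := by ring
    exact Nat.lt_of_mul_lt_mul_left hlt
  have h4b1 := hmarkov (gcnt S X) hgsum
  have h4b2 := hmarkov (hcnt S X) hhsum
  -- good counts
  set c : ℝ → ℕ := fun x => (A.filter (fun a => gcnt S X x a ≤ K ∧ hcnt S X x a ≤ K)).card with hc
  have hcx : ∀ x ∈ X', n ≤ c x + (A.filter (fun a => K < gcnt S X x a)).card
      + (A.filter (fun a => K < hcnt S X x a)).card := by
    intro x hx
    have hsplit := Finset.card_filter_add_card_filter_not
      (s := A) (p := fun a => gcnt S X x a ≤ K ∧ hcnt S X x a ≤ K)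
    have hsub : A.filter (fun a => ¬(gcnt S X x a ≤ K ∧ hcnt S X x a ≤ K)) ⊆
        (A.filter (fun a => K < gcnt S X x a)) ∪ (A.filter (fun a => K < hcnt S X x a)) := by
      intro a ha
      rw [Finset.mem_filter] at ha
      rcases ha with ⟨haA, hnot⟩
      push_neg at hnot
      rw [Finset.mem_union, Finset.mem_filter, Finset.mem_filter]
      by_cases hgle : gcnt S X x a ≤ K
      · right; exact ⟨haA, hnot hgle⟩
      · left; exact ⟨haA, by omega⟩
    have h1 := Finset.card_le_card hsub
    have h2 := Finset.card_union_le (A.filter (fun a => K < gcnt S X x a))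
      (A.filter (fun a => K < hcnt S X x a))
    simp only [hc]
    omega
  have hS1 : M * n ≤ 2 * ∑ x ∈ X', c x := by
    have hsum1 : M * n ≤ (∑ x ∈ X', c x) + ((∑ x ∈ X', (A.filter (fun a => K < gcnt S X x a)).card)
        + (∑ x ∈ X', (A.filter (fun a => K < hcnt S X x a)).card)) := by
      calc M * n = ∑ _x ∈ X', n := by rw [Finset.sum_const, smul_eq_mul]
        _ ≤ ∑ x ∈ X', (c x + (A.filter (fun a => K < gcnt S X x a)).card
            + (A.filter (fun a => K < hcnt S X x a)).card) := Finset.sum_le_sum hcx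
        _ = _ := by rw [Finset.sum_add_distrib, Finset.sum_add_distrib]; omega
    omega
  -- the key injection: counting good triples
  have hCS2 : ∑ x ∈ X', c x ^ 2 ≤ p * p * K * K := by
    set F : ℝ → Finset (ℝ × ℝ × ℕ × ℕ) := fun x =>
      ((A.filter (fun a => gcnt S X x a ≤ K ∧ hcnt S X x a ≤ K)) ×ˢ
       (A.filter (fun a => gcnt S X x a ≤ K ∧ hcnt S X x a ≤ K))).image
        (fun q => (x + q.1, x⁻¹ + q.2, gcnt S X x q.1, hcnt S X x q.2)) with hF
    have hcardF : ∀ x ∈ X', (F x).card = c x ^ 2 := by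
      intro x hx
      rw [hF]
      dsimp only
      rw [Finset.card_image_of_injOn, Finset.card_product]
      · simp only [hc, sq]
      · intro q1 hq1 q2 hq2 heq
        have e1 : x + q1.1 = x + q2.1 := congrArg (fun z => z.1) heq
        have e2 : x⁻¹ + q1.2 = x⁻¹ + q2.2 := congrArg (fun z => z.2.1) heq
        exact Prod.ext (by linarith) (by linarith)
    have hdisjF : ∀ x ∈ X', ∀ y ∈ X', x ≠ y → Disjoint (F x) (F y) := by
      intro x hx y hy hne
      rw [Finset.disjoint_left]
      intro z hzx hzy
      rw [hF] at hzx hzy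
      dsimp only at hzx hzy
      rw [Finset.mem_image] at hzx hzy
      obtain ⟨q, hq, hqz⟩ := hzx
      obtain ⟨r, hr, hrz⟩ := hzy
      rw [Finset.mem_product] at hq hr
      have hq1 := Finset.mem_filter.mp hq.1
      have hq2 := Finset.mem_filter.mp hq.2
      have hr1 := Finset.mem_filter.mp hr.1
      have hr2 := Finset.mem_filter.mp hr.2
      have heq := hqz.trans hrz.symm
      have e1 : x + q.1 = y + r.1 := congrArg (fun z => z.1) heq
      have e2 : x⁻¹ + q.2 = y⁻¹ + r.2 := congrArg (fun z => z.2.1) heq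
      have e3 : gcnt S X x q.1 = gcnt S X y r.1 := congrArg (fun z => z.2.2.1) heq
      have e4 : hcnt S X x q.2 = hcnt S X y r.2 := congrArg (fun z => z.2.2.2) heq
      exact hne (key_inj (hX0 x (hX'X x hx)) (hX0 y (hX'X y hy)) (hnxt x hx).2.1 (hnxt y hy).2.1
        (hmemS _ (hnxt x hx).1 _ hq1.1) (hmemS _ (hnxt y hy).1 _ hr1.1)
        (hmemS _ (hXinv _ (hnxt x hx).1) _ hq2.1) (hmemS _ (hXinv _ (hnxt y hy).1) _ hr2.1)
        e1 e2 e3 e4)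
    have hsubF : X'.biUnion F ⊆ S ×ˢ S ×ˢ Finset.Icc 1 K ×ˢ Finset.Icc 1 K := by
      intro z hz
      rw [Finset.mem_biUnion] at hz
      obtain ⟨x, hx, hzx⟩ := hz
      rw [hF] at hzx
      dsimp only at hzx
      rw [Finset.mem_image] at hzx
      obtain ⟨q, hq, hqz⟩ := hzx
      rw [Finset.mem_product] at hq
      have hq1 := Finset.mem_filter.mp hq.1
      have hq2 := Finset.mem_filter.mp hq.2
      subst hqz
      simp only [Finset.mem_product, Finset.mem_Icc]
      exact ⟨hmemS _ (hX'X x hx) _ hq1.1, hmemS _ (hXinv _ (hX'X x hx)) _ hq2.1,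
        ⟨hg1 x hx _ hq1.1, hq1.2.1⟩, ⟨hh1 x hx _ hq2.1, hq2.2.2⟩⟩
    calc ∑ x ∈ X', c x ^ 2 = ∑ x ∈ X', (F x).card :=
          Finset.sum_congr rfl (fun x hx => (hcardF x hx).symm)
      _ = (X'.biUnion F).card := (Finset.card_biUnion hdisjF).symm
      _ ≤ (S ×ˢ S ×ˢ Finset.Icc 1 K ×ˢ Finset.Icc 1 K).card := Finset.card_le_card hsubF
      _ = p * p * K * K := by
          simp only [Finset.card_product, Nat.card_Icc, Nat.add_sub_cancel]
          ring
  -- Cauchy-Schwarz and conclusion, over the reals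
  have hCS : ((∑ x ∈ X', c x : ℕ) : ℝ) ^ 2 ≤ (M : ℝ) * ((∑ x ∈ X', c x ^ 2 : ℕ) : ℝ) := by
    push_cast
    exact sq_sum_le_card_mul_sum_sq
  have hMpos : (0:ℝ) < (M:ℝ) := by exact_mod_cast hM1
  have hnR : (0:ℝ) < (n:ℝ) := by exact_mod_cast hn0
  have t1 : (M:ℝ) * n ≤ 2 * ((∑ x ∈ X', c x : ℕ) : ℝ) := by exact_mod_cast hS1
  have t2 : ((∑ x ∈ X', c x ^ 2 : ℕ) : ℝ) ≤ (p:ℝ) * p * K * K := by exact_mod_cast hCS2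
  have t3 : (K:ℝ) * M ≤ 4 * p := by exact_mod_cast hKM
  have hp0 : (0:ℝ) ≤ (p:ℝ) := Nat.cast_nonneg _
  have hK0 : (0:ℝ) ≤ (K:ℝ) := by positivity
  set S1R := ((∑ x ∈ X', c x : ℕ) : ℝ) with hS1R
  set S2R := ((∑ x ∈ X', c x ^ 2 : ℕ) : ℝ) with hS2R
  have hS2R0 : 0 ≤ S2R := Nat.cast_nonneg _
  have c2 : ((M:ℝ) * n)^2 ≤ 4 * ((M:ℝ) * S2R) := by
    have h1 : ((M:ℝ) * n)^2 ≤ (2 * S1R)^2 := by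
      apply pow_le_pow_left₀ (mul_nonneg (Nat.cast_nonneg _) (Nat.cast_nonneg _)) t1
    nlinarith [hCS]
  have c3 : (M:ℝ) * (n:ℝ)^2 ≤ 4 * S2R := by
    have h' : (M:ℝ) * ((M:ℝ) * (n:ℝ)^2) ≤ (M:ℝ) * (4 * S2R) := by nlinarith [c2]
    exact le_of_mul_le_mul_left h' hMpos
  have c4 : (M:ℝ)^3 * (n:ℝ)^2 ≤ 64 * (p:ℝ)^4 := by
    have d1 : (M:ℝ)^2 * ((M:ℝ) * (n:ℝ)^2) ≤ (M:ℝ)^2 * (4 * S2R) :=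
      mul_le_mul_of_nonneg_left c3 (sq_nonneg _)
    have d2 : (M:ℝ)^2 * (4 * S2R) ≤ 4 * ((K:ℝ)*M)^2 * ((p:ℝ))^2 := by nlinarith [t2, hMpos]
    have d4 : ((K:ℝ)*M)^2 ≤ (4*(p:ℝ))^2 := pow_le_pow_left₀ (mul_nonneg (Nat.cast_nonneg _) (Nat.cast_nonneg _)) t3 2
    have d5 : 4 * ((K:ℝ)*M)^2 * ((p:ℝ))^2 ≤ 4 * (4*(p:ℝ))^2 * ((p:ℝ))^2 := by nlinarith [d4, sq_nonneg (p:ℝ)]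
    nlinarith [d1, d2, d5]
  -- from M to X.card
  have hfinR : ((X.card:ℕ):ℝ)^3 * (n:ℝ)^2 ≤ 512 * (p:ℝ)^4 := by
    have hM1R : (1:ℝ) ≤ (M:ℝ) := by exact_mod_cast hM1
    have hXM : ((X.card:ℕ):ℝ) ≤ 2 * (M:ℝ) := by
      rw [hNM]; push_cast; linarith
    have h8 : ((X.card:ℕ):ℝ)^3 ≤ 8 * (M:ℝ)^3 := by
      calc ((X.card:ℕ):ℝ)^3 ≤ (2 * (M:ℝ))^3 := pow_le_pow_left₀ (Nat.cast_nonneg _) hXM 3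
        _ = 8 * (M:ℝ)^3 := by ring
    calc ((X.card:ℕ):ℝ)^3 * (n:ℝ)^2 ≤ (8 * (M:ℝ)^3) * (n:ℝ)^2 :=
          mul_le_mul_of_nonneg_right h8 (sq_nonneg _)
      _ = 8 * ((M:ℝ)^3 * (n:ℝ)^2) := by ring
      _ ≤ 8 * (64 * (p:ℝ)^4) := by linarith [c4]
      _ = 512 * (p:ℝ)^4 := by ring
  exact_mod_cast hfinR


end ENRAux

theorem large_ratio_set_case :
    ∃ c : ℝ, 0 < c ∧ ∀ A : Finset ℝ, (∀ a ∈ A, 0 < a) → 2 ≤ A.card →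
      (A.card : ℝ) ^ ((4 : ℝ) / 3 + 2 / 39) ≤ ((Finset.image₂ (· / ·) A A).card : ℝ) →
      c * (A.card : ℝ) ^ ((3 : ℝ) / 2 + 1 / 26) ≤
        ((Finset.image₂ (· + ·) (Finset.image₂ (· / ·) A A) A).card : ℝ) := by
  refine ⟨1/8, by norm_num, ?_⟩
  intro A hpos hcard hN
  classical
  set X := Finset.image₂ (· / ·) A A with hX
  have hX0 : ∀ x ∈ X, 0 < x := by
    intro x hx
    rw [hX, Finset.mem_image₂] at hx
    obtain ⟨a, ha, b, hb, rfl⟩ := hx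
    exact div_pos (hpos a ha) (hpos b hb)
  have hXinv : ∀ x ∈ X, x⁻¹ ∈ X := by
    intro x hx
    rw [hX, Finset.mem_image₂] at hx
    obtain ⟨a, ha, b, hb, rfl⟩ := hx
    rw [hX, Finset.mem_image₂]
    exact ⟨b, hb, a, ha, by rw [inv_div]⟩
  have hX2 : 2 ≤ X.card := by
    obtain ⟨a, ha, b, hb, hab⟩ := Finset.one_lt_card.mp hcard
    have h1 : a / b ∈ X := Finset.mem_image₂_of_mem ha hb
    have h2 : b / b ∈ X := Finset.mem_image₂_of_mem hb hb
    have hne : a / b ≠ b / b := by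
      rw [div_self (ne_of_gt (hpos b hb))]
      intro hcon
      exact hab ((div_eq_one_iff_eq (ne_of_gt (hpos b hb))).mp hcon)
    exact Finset.one_lt_card.mpr ⟨_, h1, _, h2, hne⟩
  have hA : A.Nonempty := Finset.card_pos.mp (by omega)
  have hcore := ENRAux.enr_core X A hX0 hXinv hA hX2
  set p := (Finset.image₂ (· + ·) X A).card with hpdef
  set n := A.card with hndef
  have hn2 : (2:ℝ) ≤ (n:ℝ) := by exact_mod_cast hcard
  have hn0 : (0:ℝ) < (n:ℝ) := by linarith
  have hcast : ((X.card:ℕ):ℝ)^3 * (n:ℝ)^2 ≤ 512 * (p:ℝ)^4 := by exact_mod_cast hcore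
  have h3 : ((n:ℝ) ^ ((4:ℝ)/3 + 2/39))^3 ≤ ((X.card:ℕ):ℝ)^3 :=
    pow_le_pow_left₀ (Real.rpow_nonneg hn0.le _) hN 3
  have hL : ((n:ℝ) ^ ((4:ℝ)/3 + 2/39))^(3:ℕ) * (n:ℝ)^(2:ℕ)
      = (n:ℝ) ^ (((3:ℝ)/2 + 1/26) * 4) := by
    rw [← Real.rpow_natCast ((n:ℝ) ^ ((4:ℝ)/3+2/39)) 3, ← Real.rpow_mul hn0.le,
        ← Real.rpow_natCast (n:ℝ) 2, ← Real.rpow_add hn0]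
    norm_num
  have h4 : (n:ℝ) ^ (((3:ℝ)/2 + 1/26) * 4) ≤ 512 * (p:ℝ)^4 := by
    rw [← hL]
    calc ((n:ℝ) ^ ((4:ℝ)/3 + 2/39))^(3:ℕ) * (n:ℝ)^(2:ℕ)
        ≤ ((X.card:ℕ):ℝ)^3 * (n:ℝ)^2 := mul_le_mul_of_nonneg_right h3 (by positivity)
      _ ≤ 512 * (p:ℝ)^4 := hcast
  have hexp : ((n:ℝ) ^ ((3:ℝ)/2 + 1/26))^(4:ℕ) = (n:ℝ) ^ (((3:ℝ)/2 + 1/26) * 4) := by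
    rw [← Real.rpow_natCast ((n:ℝ) ^ ((3:ℝ)/2 + 1/26)) 4, ← Real.rpow_mul hn0.le]
    norm_num
  have hgoal4 : ((1/8:ℝ) * (n:ℝ) ^ ((3:ℝ)/2 + 1/26))^(4:ℕ) ≤ (p:ℝ)^4 := by
    calc ((1/8:ℝ) * (n:ℝ) ^ ((3:ℝ)/2 + 1/26))^(4:ℕ)
        = (1/4096) * ((n:ℝ) ^ ((3:ℝ)/2 + 1/26))^(4:ℕ) := by ring
      _ = (1/4096) * (n:ℝ) ^ (((3:ℝ)/2 + 1/26) * 4) := by rw [hexp]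
      _ ≤ (1/4096) * (512 * (p:ℝ)^4) := by linarith [h4]
      _ ≤ (p:ℝ)^4 := by nlinarith [pow_nonneg (by positivity : (0:ℝ) ≤ (p:ℝ)) 4]
  exact le_of_pow_le_pow_left₀ (by norm_num) (by positivity) hgoal4
end

section
/- Let A be a finite set of positive reals, λ₁ < λ₂ < ⋯ < λ_k positive reals with each |A_{λ_i}| ≥ τ, where A_λ = {x ∈ A : λx ∈ A}, and for each i fix a point p_i = (a_i, λ_i a_i) with a_i ∈ A_{λ_i}. Then for any i < j, the set 𝒜_{λ_i} + p_j·Δ(A^{-1}) := {(x + a_j/a, λ_i x + λ_j a_j/a) : x ∈ A_{λ_i}, a ∈ A} is a subset of (A/A + A) × (A/A + A), has cardinality at least τ|A|, and all its elements have slope strictly between λ_i and λ_j. -/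
open Finset

theorem balog_pair_of_lines (A : Finset ℝ) (hA : ∀ x ∈ A, 0 < x)
    (k : ℕ) (l : ℕ → ℝ) (hpos : ∀ i < k, 0 < l i)
    (hmono : ∀ i j, i < j → j < k → l i < l j)
    (τ : ℝ) (hτ : ∀ i < k, τ ≤ ((A.filter fun x => l i * x ∈ A).card : ℝ))
    (a : ℕ → ℝ) (ha : ∀ i < k, a i ∈ A.filter fun x => l i * x ∈ A)
    (i j : ℕ) (hij : i < j) (hjk : j < k) :
    (Finset.image₂ (fun x b => (x + a j / b, l i * x + l j * a j / b))
        (A.filter fun x => l i * x ∈ A) A ⊆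
      (Finset.image₂ (· + ·) (Finset.image₂ (· / ·) A A) A) ×ˢ
        (Finset.image₂ (· + ·) (Finset.image₂ (· / ·) A A) A)) ∧
    τ * (A.card : ℝ) ≤
      ((Finset.image₂ (fun x b => (x + a j / b, l i * x + l j * a j / b))
        (A.filter fun x => l i * x ∈ A) A).card : ℝ) ∧
    ∀ z ∈ Finset.image₂ (fun x b => (x + a j / b, l i * x + l j * a j / b))
        (A.filter fun x => l i * x ∈ A) A,
      l i < z.2 / z.1 ∧ z.2 / z.1 < l j := by
  have hik : i < k := hij.trans hjk
  have hli : 0 < l i := hpos i hik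
  have hlj : 0 < l j := hpos j hjk
  have hlij : l i < l j := hmono i j hij hjk
  have haj := ha j hjk
  rw [Finset.mem_filter] at haj
  have hajA : a j ∈ A := haj.1
  have hajpos : 0 < a j := hA _ hajA
  have hljaj : l j * a j ∈ A := haj.2
  refine ⟨?_, ?_, ?_⟩
  · intro z hz
    rw [Finset.mem_image₂] at hz
    obtain ⟨x, hx, b, hb, rfl⟩ := hz
    rw [Finset.mem_filter] at hx
    rw [Finset.mem_product]
    constructor
    · rw [Finset.mem_image₂]
      exact ⟨a j / b, Finset.mem_image₂_of_mem hajA hb, x, hx.1, by ring⟩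
    · rw [Finset.mem_image₂]
      exact ⟨l j * a j / b,
        Finset.mem_image₂_of_mem hljaj hb, l i * x, hx.2, by ring⟩
  · have hinj : Set.InjOn
        (fun p : ℝ × ℝ => (p.1 + a j / p.2, l i * p.1 + l j * a j / p.2))
        ↑((A.filter fun x => l i * x ∈ A) ×ˢ A) := by
      rintro ⟨x, b⟩ hxb ⟨x', b'⟩ hxb' heq
      simp only [Finset.mem_coe, Finset.mem_product, Finset.mem_filter] at hxb hxb'
      have hb : (0:ℝ) < b := hA _ hxb.2
      have hb' : (0:ℝ) < b' := hA _ hxb'.2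
      simp only [Prod.mk.injEq] at heq
      obtain ⟨h1, h2⟩ := heq
      have hxx : (l i - l j) * (x - x') = 0 := by
        linear_combination h2 - l j * h1
      have hx : x = x' := by
        rcases mul_eq_zero.mp hxx with h | h
        · exact absurd h (sub_ne_zero.mpr hlij.ne)
        · linarith
      subst hx
      have hdd : a j / b = a j / b' := by linarith
      have hbb : b = b' := by
        field_simp at hdd
        exact hdd.symm
      simp [hbb]
    have hcard : ((A.filter fun x => l i * x ∈ A) ×ˢ A).card =
        (Finset.image₂ (fun x b => (x + a j / b, l i * x + l j * a j / b))
          (A.filter fun x => l i * x ∈ A) A).card := by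
      rw [← Finset.image_uncurry_product]
      exact (Finset.card_image_of_injOn hinj).symm
    rw [← hcard, Finset.card_product]
    push_cast
    have h1 : τ ≤ ((A.filter fun x => l i * x ∈ A).card : ℝ) := hτ i hik
    have h2 : (0:ℝ) ≤ (A.card : ℝ) := Nat.cast_nonneg _
    nlinarith
  · intro z hz
    rw [Finset.mem_image₂] at hz
    obtain ⟨x, hx, b, hb, rfl⟩ := hz
    rw [Finset.mem_filter] at hx
    have hxpos : 0 < x := hA _ hx.1
    have hbpos : 0 < b := hA _ hb
    have hc : 0 < a j / b := by positivity
    have hden : 0 < x + a j / b := by positivity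
    dsimp only
    constructor
    · rw [lt_div_iff₀ hden, mul_div_assoc]
      nlinarith [mul_pos (sub_pos.mpr hlij) hc]
    · rw [div_lt_iff₀ hden, mul_div_assoc]
      nlinarith [mul_pos (sub_pos.mpr hlij) hxpos]
end
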